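/- arXiv:1109.2171 — 4 statements merged into one kernel-verified Lean document; each statement's English description precedes it below -/
import Mathlib

section
/- The N × N matrix B with entries B_{kl} = e^{-p} exp(p e^{2πi(l-k)/N}), for p > 0, is a Hermitian circulant matrix whose eigenvalues are λ̂_j = N e^{-p} ∑_{q=0}^{∞} p^{j+qN} / (j+qN)! for j = 0,…,N-1. In particular all eigenvalues are strictly positive and B is invertible. -/
open Matrix

open Complex

section Aux
variable (N : ℕ) (hN : 0 < N)

noncomputable def omegaN : ℂ := Complex.exp (2 * Real.pi * Complex.I / (N:ℂ))

lemma omegaN_ne_zero : omegaN N ≠ 0 := Complex.exp_ne_zero _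

lemma omegaN_pow_N (hN : 0 < N) : omegaN N ^ (N:ℤ) = 1 := by
  have hN0 : (N:ℂ) ≠ 0 := Nat.cast_ne_zero.mpr hN.ne'
  rw [omegaN, ← Complex.exp_int_mul]
  have : ((N:ℤ):ℂ) * (2 * Real.pi * Complex.I / (N:ℂ)) = 2 * Real.pi * Complex.I := by
    push_cast; field_simp
  rw [this, Complex.exp_two_pi_mul_I]

lemma omegaN_per (hN : 0 < N) {x y : ℤ} (h : (N:ℤ) ∣ x - y) : omegaN N ^ x = omegaN N ^ y := by
  obtain ⟨q, hq⟩ := h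
  have hx : x = y + N * q := by omega
  rw [hx, zpow_add₀ (omegaN_ne_zero N), _root_.zpow_mul, omegaN_pow_N N hN, _root_.one_zpow, mul_one]

lemma omegaN_eq_one_iff (hN : 0 < N) (t : ℤ) : omegaN N ^ t = 1 ↔ (N:ℤ) ∣ t := by
  constructor
  · intro h
    have hN0 : (N:ℂ) ≠ 0 := Nat.cast_ne_zero.mpr hN.ne'
    rw [omegaN, ← Complex.exp_int_mul, Complex.exp_eq_one_iff] at h
    obtain ⟨n, hn⟩ := h
    have hpi : (2 * Real.pi * Complex.I : ℂ) ≠ 0 := by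
      simp [Complex.ext_iff, Real.pi_ne_zero, Real.pi_pos.ne']
    have h3 : (t:ℂ) * (2 * Real.pi * Complex.I) = (n * N) * (2 * Real.pi * Complex.I) := by
      have h2 := congrArg (· * (N:ℂ)) hn
      field_simp at h2
      linear_combination (2 * Real.pi * Complex.I) * h2
    have h4 : (t:ℂ) = n * N := mul_right_cancel₀ hpi h3
    have ht : t = n * N := by exact_mod_cast h4
    exact ⟨n, by rw [ht]; ring⟩
  · intro h
    exact (omegaN_per N hN (by simpa using h)).trans (zpow_zero _)

lemma omegaN_geom (hN : 0 < N) {t : ℤ} (h : ¬ (N:ℤ) ∣ t) :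
    ∑ l : Fin N, omegaN N ^ (t * (l:ℤ)) = 0 := by
  have hζ1 : omegaN N ^ t ≠ 1 := fun hc => h ((omegaN_eq_one_iff N hN t).mp hc)
  have : ∀ l : Fin N, omegaN N ^ (t * (l:ℤ)) = (omegaN N ^ t) ^ (l:ℕ) := by
    intro l; rw [_root_.zpow_mul, zpow_natCast]
  simp_rw [this]
  rw [Fin.sum_univ_eq_sum_range (fun i => (omegaN N ^ t) ^ i), geom_sum_eq hζ1]
  have : (omegaN N ^ t) ^ N = 1 := by
    rw [← zpow_natCast, ← _root_.zpow_mul]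
    have hd : (N:ℤ) ∣ (t * N - 0) := ⟨t, by ring⟩
    exact (omegaN_per N hN hd).trans (zpow_zero _)
  rw [this, sub_self, zero_div]

end Aux

lemma omegaN_exp_form (N : ℕ) (x : ℤ) :
    Complex.exp (2 * Real.pi * Complex.I * (x:ℂ) / (N:ℂ)) = omegaN N ^ x := by
  rw [omegaN, ← Complex.exp_int_mul]
  congr 1
  push_cast
  ring

lemma omegaN_conj (N : ℕ) (t : ℤ) :
    (starRingEnd ℂ) (omegaN N ^ t) = omegaN N ^ (-t) := by
  rw [map_zpow₀]
  have h1 : (starRingEnd ℂ) (omegaN N) = (omegaN N)⁻¹ := by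
    have habs : ‖omegaN N‖ = 1 := by
      rw [omegaN, Complex.norm_exp]
      convert Real.exp_zero using 2
      simp [Complex.div_re, Complex.mul_re, Complex.mul_im]
    have := Complex.mul_conj (omegaN N)
    rw [Complex.normSq_eq_norm_sq, habs] at this
    field_simp [omegaN_ne_zero N] at this ⊢
    push_cast at this
    linear_combination this
  rw [h1, _root_.inv_zpow, ← _root_.zpow_neg]

lemma exp_summable_div (z : ℂ) : Summable (fun m : ℕ => z ^ m / m.factorial) := by
  have := NormedSpace.expSeries_div_summable z
  exact this


lemma eigen_calc (N : ℕ) (hN : 0 < N) (p : ℝ) (j k : Fin N) :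
    ∑ l : Fin N, (Real.exp (-p) : ℂ) * Complex.exp ((p : ℂ) * omegaN N ^ ((l:ℤ) - (k:ℤ))) *
        omegaN N ^ (-((j:ℤ) * (l:ℤ)))
      = ((N : ℂ) * Real.exp (-p) *
          ∑' q : ℕ, ((p ^ ((j:ℕ) + q * N) / Nat.factorial ((j:ℕ) + q * N) : ℝ) : ℂ)) *
        omegaN N ^ (-((j:ℤ) * (k:ℤ))) := by
  set ω := omegaN N with hωdef
  have hω0 : ω ≠ 0 := omegaN_ne_zero N
  have hexp : ∀ z : ℂ, Complex.exp z = ∑' m : ℕ, z ^ m / m.factorial := by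
    intro z; rw [Complex.exp_eq_exp_ℂ, NormedSpace.exp_eq_tsum_div]
  set F : Fin N → ℕ → ℂ := fun l m =>
    (Real.exp (-p) : ℂ) * (((p : ℂ) * ω ^ ((l:ℤ) - (k:ℤ))) ^ m / m.factorial) *
      ω ^ (-((j:ℤ) * (l:ℤ))) with hFdef
  have hterm : ∀ l : Fin N,
      (Real.exp (-p) : ℂ) * Complex.exp ((p : ℂ) * ω ^ ((l:ℤ) - (k:ℤ))) *
        ω ^ (-((j:ℤ) * (l:ℤ))) = ∑' m : ℕ, F l m := by
    intro l
    rw [hexp, ← tsum_mul_left, ← tsum_mul_right]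
  have hFs : ∀ l : Fin N, Summable (F l) := fun l =>
    ((exp_summable_div _).mul_left _).mul_right _
  set G : ℕ → ℂ := fun m =>
    if (N:ℤ) ∣ ((m:ℤ) - (j:ℤ)) then
      ((N : ℂ) * Real.exp (-p) * ((p : ℂ) ^ m / m.factorial)) * ω ^ (-((j:ℤ) * (k:ℤ)))
    else 0 with hGdef
  have hF2 : ∀ (l : Fin N) (m : ℕ), F l m =
      ((Real.exp (-p) : ℂ) * ((p : ℂ) ^ m / m.factorial) * ω ^ (-((m:ℤ) * (k:ℤ)))) *
        ω ^ (((m:ℤ) - (j:ℤ)) * (l:ℤ)) := by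
    intro l m
    have hz : ω ^ (((l:ℤ) - (k:ℤ)) * (m:ℤ)) * ω ^ (-((j:ℤ) * (l:ℤ)))
        = ω ^ (-((m:ℤ) * (k:ℤ))) * ω ^ (((m:ℤ) - (j:ℤ)) * (l:ℤ)) := by
      rw [← zpow_add₀ hω0, ← zpow_add₀ hω0]; congr 1; ring
    have hpow : (ω ^ ((l:ℤ) - (k:ℤ))) ^ m = ω ^ (((l:ℤ) - (k:ℤ)) * (m:ℤ)) := by
      rw [_root_.zpow_mul, zpow_natCast]
    rw [hFdef]
    simp only [mul_pow, hpow]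
    linear_combination ((Real.exp (-p) : ℂ) * (p : ℂ) ^ m / (m.factorial : ℂ)) * hz
  have hG : ∀ m : ℕ, (∑ l : Fin N, F l m) = G m := by
    intro m
    simp_rw [hF2, ← Finset.mul_sum]
    by_cases hdvd : (N:ℤ) ∣ ((m:ℤ) - (j:ℤ))
    · have h1 : ∀ l : Fin N, ω ^ (((m:ℤ) - (j:ℤ)) * (l:ℤ)) = 1 := by
        intro l
        have : (N:ℤ) ∣ ((m:ℤ) - (j:ℤ)) * (l:ℤ) - 0 := by
          simpa using hdvd.mul_right (l:ℤ)
        exact (omegaN_per N hN this).trans (zpow_zero _)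
      have h2 : ω ^ (-((m:ℤ) * (k:ℤ))) = ω ^ (-((j:ℤ) * (k:ℤ))) := by
        apply omegaN_per N hN
        have := hdvd.mul_right (k:ℤ)
        have h3 : -((m:ℤ) * (k:ℤ)) - -((j:ℤ) * (k:ℤ)) = -(((m:ℤ) - (j:ℤ)) * (k:ℤ)) := by ring
        rw [h3]
        exact dvd_neg.mpr this
      simp_rw [h1]
      rw [hGdef]
      simp only [if_pos hdvd, Finset.sum_const, Finset.card_univ, Fintype.card_fin,
        nsmul_eq_mul, mul_one, h2]
      ring
    · rw [omegaN_geom N hN hdvd, mul_zero, hGdef]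
      simp [hdvd]
  have hswap : ∑ l : Fin N, (Real.exp (-p) : ℂ) *
        Complex.exp ((p : ℂ) * ω ^ ((l:ℤ) - (k:ℤ))) * ω ^ (-((j:ℤ) * (l:ℤ)))
      = ∑' m : ℕ, G m := by
    calc ∑ l : Fin N, (Real.exp (-p) : ℂ) *
          Complex.exp ((p : ℂ) * ω ^ ((l:ℤ) - (k:ℤ))) * ω ^ (-((j:ℤ) * (l:ℤ)))
        = ∑ l : Fin N, ∑' m : ℕ, F l m := Finset.sum_congr rfl (fun l _ => hterm l)
      _ = ∑' m : ℕ, ∑ l : Fin N, F l m := (Summable.tsum_finsetSum (fun l _ => hFs l)).symm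
      _ = ∑' m : ℕ, G m := by simp_rw [hG]
  rw [hswap]
  -- restrict the tsum to the support
  have hinj : Function.Injective (fun q : ℕ => (j:ℕ) + q * N) := by
    intro a b h
    simp only at h
    have : a * N = b * N := by omega
    exact Nat.eq_of_mul_eq_mul_right hN this
  have hsupp : Function.support G ⊆ Set.range (fun q : ℕ => (j:ℕ) + q * N) := by
    intro m hm
    rw [Function.mem_support, hGdef] at hm
    by_cases hdvd : (N:ℤ) ∣ ((m:ℤ) - (j:ℤ))
    · obtain ⟨d, hd⟩ := hdvd
      have hjN : (j:ℤ) < N := by exact_mod_cast j.isLt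
      have hd0 : 0 ≤ d := by
        by_contra h'
        push_neg at h'
        have : (N:ℤ) * d ≤ (N:ℤ) * (-1) := by
          apply mul_le_mul_of_nonneg_left (by omega) (by positivity)
        omega
      refine ⟨d.toNat, ?_⟩
      have hm' : ((j:ℕ) + d.toNat * N : ℤ) = (m:ℤ) := by
        push_cast
        rw [Int.toNat_of_nonneg hd0]
        linarith
      exact_mod_cast hm'
    · exact absurd (if_neg hdvd) hm
  rw [← Function.Injective.tsum_eq hinj hsupp]
  have hGval : ∀ q : ℕ, G ((j:ℕ) + q * N) =
      ((N : ℂ) * Real.exp (-p) *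
        ((p ^ ((j:ℕ) + q * N) / Nat.factorial ((j:ℕ) + q * N) : ℝ) : ℂ)) *
      ω ^ (-((j:ℤ) * (k:ℤ))) := by
    intro q
    have hdvd : (N:ℤ) ∣ ((((j:ℕ) + q * N : ℕ)):ℤ) - (j:ℤ) := ⟨q, by push_cast; ring⟩
    rw [hGdef]
    simp only [if_pos hdvd]
    push_cast
    ring
  simp_rw [hGval]
  rw [tsum_mul_right, ← tsum_mul_left]
theorem stmt5 (N : ℕ) (hN : 0 < N) (p : ℝ) (hp : 0 < p)
    (B : Matrix (Fin N) (Fin N) ℂ)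
    (hB : ∀ k l : Fin N, B k l = (Real.exp (-p) : ℂ) *
      Complex.exp ((p : ℂ) * Complex.exp (2 * Real.pi * Complex.I * ((l : ℂ) - (k : ℂ)) / (N : ℂ))))
    (lamhat : Fin N → ℝ)
    (hlam : ∀ j : Fin N, lamhat j = (N : ℝ) * Real.exp (-p) *
      ∑' q : ℕ, p ^ ((j : ℕ) + q * N) / Nat.factorial ((j : ℕ) + q * N)) :
    B.IsHermitian ∧
    (∃ c : Fin N → ℂ, B = Matrix.circulant c) ∧
    (∀ j : Fin N,
      B.mulVec (fun k : Fin N => Complex.exp (-(2 * Real.pi * Complex.I) * (j : ℂ) * (k : ℂ) / (N : ℂ))) =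
        ((lamhat j : ℂ)) • (fun k : Fin N => Complex.exp (-(2 * Real.pi * Complex.I) * (j : ℂ) * (k : ℂ) / (N : ℂ)))) ∧
    (∀ j : Fin N, 0 < lamhat j) ∧ IsUnit B := by
  have hNC : (N : ℂ) ≠ 0 := Nat.cast_ne_zero.mpr hN.ne'
  set ω := omegaN N with hωdef
  have hω0 : ω ≠ 0 := omegaN_ne_zero N
  -- entries of B in terms of ω
  have hBω : ∀ k l : Fin N, B k l =
      (Real.exp (-p) : ℂ) * Complex.exp ((p : ℂ) * ω ^ ((l:ℤ) - (k:ℤ))) := by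
    intro k l
    rw [hB]
    have hcast : ((((l:ℤ) - (k:ℤ)) : ℤ) : ℂ) = (l : ℂ) - (k : ℂ) := by push_cast; ring
    rw [← hcast, omegaN_exp_form]
  -- eigenvector entries in terms of ω
  have hv : ∀ j k : Fin N,
      Complex.exp (-(2 * Real.pi * Complex.I) * (j : ℂ) * (k : ℂ) / (N : ℂ)) =
        ω ^ (-((j:ℤ) * (k:ℤ))) := by
    intro j k
    rw [← omegaN_exp_form N (-((j:ℤ) * (k:ℤ)))]
    congr 1
    push_cast
    ring
  -- the key eigenvalue identity
  have heig : ∀ j k : Fin N,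
      ∑ l : Fin N, B k l * ω ^ (-((j:ℤ) * (l:ℤ))) = (lamhat j : ℂ) * ω ^ (-((j:ℤ) * (k:ℤ))) := by
    intro j k
    have h1 : ∑ l : Fin N, B k l * ω ^ (-((j:ℤ) * (l:ℤ)))
        = ∑ l : Fin N, (Real.exp (-p) : ℂ) * Complex.exp ((p : ℂ) * ω ^ ((l:ℤ) - (k:ℤ))) *
            ω ^ (-((j:ℤ) * (l:ℤ))) :=
      Finset.sum_congr rfl (fun l _ => by rw [hBω])
    rw [h1, eigen_calc N hN p j k, hlam j]
    push_cast [Complex.ofReal_tsum]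
    ring
  refine ⟨?_, ?_, ?_, ?_⟩
  · -- Hermitian
    show B.conjTranspose = B
    ext i j
    rw [Matrix.conjTranspose_apply, hBω j i, hBω i j]
    rw [Complex.star_def, _root_.map_mul, Complex.conj_ofReal, ← Complex.exp_conj, _root_.map_mul, Complex.conj_ofReal,
      omegaN_conj]
    have : -((i:ℤ) - (j:ℤ)) = (j:ℤ) - (i:ℤ) := by ring
    rw [this]
  · -- circulant
    refine ⟨fun i => (Real.exp (-p) : ℂ) * Complex.exp ((p : ℂ) * ω ^ (-((i:ℕ):ℤ))), ?_⟩
    ext k l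
    rw [Matrix.circulant_apply, hBω k l]
    have hexpo : ω ^ (-(((k - l : Fin N) : ℕ) : ℤ)) = ω ^ ((l:ℤ) - (k:ℤ)) := by
      apply omegaN_per N hN
      have h1 : (((k - l : Fin N) : ℕ) : ℤ) = ((N - (l:ℕ) + (k:ℕ)) % N : ℕ) := by
        rw [Fin.sub_def]
      have h2 : ((N - (l:ℕ) + (k:ℕ) : ℕ) : ℤ) = (N:ℤ) - (l:ℤ) + (k:ℤ) := by
        push_cast [Nat.cast_sub l.isLt.le]
        ring
      have h3 : (((N - (l:ℕ) + (k:ℕ)) % N : ℕ) : ℤ) = ((N - (l:ℕ) + (k:ℕ) : ℕ) : ℤ) % (N:ℤ) :=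
        Int.natCast_mod _ _
      refine ⟨-1 + ((N - (l:ℕ) + (k:ℕ) : ℕ) : ℤ) / (N:ℤ), ?_⟩
      rw [h1, h3, Int.emod_def, h2]
      ring
    rw [hexpo]
  · -- eigenvectors
    intro j
    funext k
    show ∑ l : Fin N, B k l * _ = _
    simp only [Pi.smul_apply, smul_eq_mul]
    simp_rw [hv]
    exact heig j k
  have hposall : ∀ j : Fin N, 0 < lamhat j := by
    intro j
    rw [hlam j]
    have hinj : Function.Injective (fun q : ℕ => (j:ℕ) + q * N) := by
      intro a b h
      simp only at h
      have : a * N = b * N := by omega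
      exact Nat.eq_of_mul_eq_mul_right hN this
    have hsum : Summable (fun q : ℕ => p ^ ((j:ℕ) + q * N) / Nat.factorial ((j:ℕ) + q * N)) :=
      (Real.summable_pow_div_factorial p).comp_injective hinj
    have hpos : 0 < ∑' q : ℕ, p ^ ((j:ℕ) + q * N) / Nat.factorial ((j:ℕ) + q * N) :=
      Summable.tsum_pos hsum (fun q => by positivity) 0 (by positivity)
    have hN' : (0:ℝ) < N := by exact_mod_cast hN
    positivity
  refine ⟨hposall, ?_⟩
  -- invertibility
  set v : Fin N → ℂ := fun k => ω ^ (-((k:ℕ):ℤ)) with hvdef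
  set Fm : Matrix (Fin N) (Fin N) ℂ := Matrix.vandermonde v with hFm
  have hFmap : ∀ k j' : Fin N, Fm k j' = ω ^ (-((j':ℤ) * (k:ℤ))) := by
    intro k j'
    rw [hFm, Matrix.vandermonde_apply, hvdef]
    rw [← zpow_natCast (ω ^ (-((k:ℕ):ℤ))), ← _root_.zpow_mul]
    congr 1
    ring
  have hBF : B * Fm = Fm * Matrix.diagonal (fun j' : Fin N => (lamhat j' : ℂ)) := by
    ext k j'
    rw [Matrix.mul_apply, Matrix.mul_diagonal]
    simp_rw [hFmap]
    rw [mul_comm (ω ^ (-((j':ℤ) * (k:ℤ))))]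
    exact heig j' k
  have hvinj : Function.Injective v := by
    intro a b hab
    have h1 : ω ^ ((-((a:ℕ):ℤ)) - (-((b:ℕ):ℤ))) = 1 := by
      rw [zpow_sub₀ hω0]
      rw [hvdef] at hab
      simp only at hab
      rw [hab, div_self (zpow_ne_zero _ hω0)]
    obtain ⟨d, hd⟩ := (omegaN_eq_one_iff N hN _).mp h1
    have ha : ((a:ℕ):ℤ) < N := by exact_mod_cast a.isLt
    have hb : ((b:ℕ):ℤ) < N := by exact_mod_cast b.isLt
    have ha0 : (0:ℤ) ≤ ((a:ℕ):ℤ) := by positivity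
    have hb0 : (0:ℤ) ≤ ((b:ℕ):ℤ) := by positivity
    have hd0 : d = 0 := by
      rcases lt_trichotomy d 0 with h | h | h
      · have : (N:ℤ) * d ≤ (N:ℤ) * (-1) := by
          apply mul_le_mul_of_nonneg_left (by omega) (by positivity)
        omega
      · exact h
      · have : (N:ℤ) * 1 ≤ (N:ℤ) * d := by
          apply mul_le_mul_of_nonneg_left (by omega) (by positivity)
        omega
    have hab' : ((a:ℕ):ℤ) = ((b:ℕ):ℤ) := by
      rw [hd0, mul_zero] at hd
      omega
    exact Fin.ext (by exact_mod_cast hab')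
  have hdetF : Fm.det ≠ 0 := by
    rw [hFm, Matrix.det_vandermonde]
    apply Finset.prod_ne_zero_iff.mpr
    intro i _
    apply Finset.prod_ne_zero_iff.mpr
    intro j' hj'
    have hij : i ≠ j' := (Finset.mem_Ioi.mp hj').ne'.symm
    exact sub_ne_zero.mpr (fun hc => hij (hvinj hc).symm)
  have hdetD : (Matrix.diagonal (fun j' : Fin N => (lamhat j' : ℂ))).det ≠ 0 := by
    rw [Matrix.det_diagonal]
    apply Finset.prod_ne_zero_iff.mpr
    intro i _
    exact Complex.ofReal_ne_zero.mpr (hposall i).ne'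
  have hdet : B.det = (Matrix.diagonal fun j' : Fin N => (lamhat j' : ℂ)).det := by
    have h := congrArg Matrix.det hBF
    rw [Matrix.det_mul, Matrix.det_mul] at h
    exact mul_right_cancel₀ hdetF (by rw [h]; ring)
  rw [Matrix.isUnit_iff_isUnit_det, hdet]
  exact isUnit_iff_ne_zero.mpr hdetD
end

section
/- For p > 0 and j, s, t nonnegative integers with j ≤ N-1, the matrix elements of the projector P_S onto the span of the N coherent states |z_k⟩, z_k = √p e^{2πik/N}, in the Fock basis are P_{mn} = √(λ_m λ_n) / λ̂_{n mod N} if (n-m) mod N = 0 and 0 otherwise, where λ_n = N e^{-p} p^n/n! and λ̂_j = ∑_{q=0}^∞ λ_{j+qN}. Equivalently, for m = j+sN and n = j+tN, P_{mn} = j! p^{(s+t)N/2} / (√((j+sN)!) √((j+tN)!) (1+ν_j(p,N))). -/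
open Complex Finset

noncomputable def om (N : ℕ) : ℂ := Complex.exp (2 * Real.pi * Complex.I / N)

lemma om_ne_zero (N : ℕ) : om N ≠ 0 := Complex.exp_ne_zero _

lemma om_zpow (N : ℕ) (d : ℤ) :
    om N ^ d = Complex.exp (2 * Real.pi * Complex.I * d / (N : ℂ)) := by
  rw [om, ← Complex.exp_int_mul]
  congr 1; push_cast; ring

lemma om_zpow_eq_one (N : ℕ) (hN : 0 < N) (d : ℤ) :
    om N ^ d = 1 ↔ (N : ℤ) ∣ d := by
  rw [om_zpow, Complex.exp_eq_one_iff]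
  have hNC : (N : ℂ) ≠ 0 := Nat.cast_ne_zero.2 hN.ne'
  have h2 : (2 * (Real.pi : ℂ) * Complex.I) ≠ 0 := by
    simp [Real.pi_ne_zero, Complex.I_ne_zero, Complex.ofReal_ne_zero]
  constructor
  · rintro ⟨n, hn⟩
    refine ⟨n, ?_⟩
    have h3 : (2 * (Real.pi : ℂ) * Complex.I) * d = (2 * (Real.pi : ℂ) * Complex.I) * ((N : ℂ) * n) := by
      field_simp at hn
      linear_combination (2 * (Real.pi : ℂ) * Complex.I) * hn
    have h4 : (d : ℂ) = (N : ℂ) * n := mul_left_cancel₀ h2 h3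
    exact_mod_cast h4
  · rintro ⟨n, rfl⟩
    exact ⟨n, by push_cast; field_simp⟩

lemma sum_om (N : ℕ) (hN : 0 < N) (d : ℤ) :
    ∑ c : Fin N, om N ^ ((c : ℤ) * d) = if (N : ℤ) ∣ d then (N : ℂ) else 0 := by
  have key : ∀ c : Fin N, om N ^ ((c : ℤ) * d) = (om N ^ d) ^ (c : ℕ) := by
    intro c
    rw [mul_comm, zpow_mul, ← zpow_natCast]
  simp_rw [key]
  by_cases h : (N : ℤ) ∣ d
  · rw [if_pos h]
    have h1 : om N ^ d = 1 := (om_zpow_eq_one N hN d).2 h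
    simp [h1]
  · rw [if_neg h]
    have h1 : om N ^ d ≠ 1 := fun hh => h ((om_zpow_eq_one N hN d).1 hh)
    have := geom_sum_eq h1 N
    rw [Fin.sum_univ_eq_sum_range, this]
    have hNN : (om N ^ d) ^ N = 1 := by
      rw [← zpow_natCast, ← zpow_mul, mul_comm, zpow_mul, (om_zpow_eq_one N hN N).2 dvd_rfl, one_zpow]
    rw [hNN, sub_self, zero_div]

lemma norm_om_zpow (N : ℕ) (hN : 0 < N) (d : ℤ) : ‖om N ^ d‖ = 1 := by
  rw [om_zpow]
  have h : 2 * (Real.pi : ℂ) * Complex.I * d / (N : ℂ) =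
      ((2 * Real.pi * d / N : ℝ) : ℂ) * Complex.I := by push_cast; ring
  rw [h]
  exact Complex.norm_exp_ofReal_mul_I _

lemma cexp_tsum (z : ℂ) : Complex.exp z = ∑' m : ℕ, z ^ m / (Nat.factorial m : ℂ) := by
  rw [Complex.exp_eq_exp_ℂ, NormedSpace.exp_eq_tsum_div]

lemma summable_om (N : ℕ) (hN : 0 < N) (p : ℝ) (g : ℕ → ℤ) :
    Summable fun m : ℕ => (p : ℂ) ^ m / (Nat.factorial m : ℂ) * om N ^ (g m) := by
  apply Summable.of_norm_bounded (g := fun m => |p| ^ m / (Nat.factorial m))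
    (Real.summable_pow_div_factorial |p|)
  intro m
  rw [norm_mul, norm_om_zpow N hN, mul_one, norm_div]
  simp [abs_pow]

lemma muD (N : ℕ) (hN : 0 < N) (p : ℝ) (j : ℕ) (hj : j < N) :
    ∑ c : Fin N, Complex.exp ((p : ℂ) * om N ^ (c : ℕ)) * om N ^ (-((c : ℤ) * j)) =
      ∑' q : ℕ, ((N : ℂ) * (p : ℂ) ^ (j + q * N) / (Nat.factorial (j + q * N) : ℂ)) := by
  have step1 : ∀ c : Fin N, Complex.exp ((p : ℂ) * om N ^ (c : ℕ)) * om N ^ (-((c : ℤ) * j)) =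
      ∑' m : ℕ, (p : ℂ) ^ m / (Nat.factorial m : ℂ) * om N ^ ((c : ℤ) * ((m : ℤ) - j)) := by
    intro c
    rw [cexp_tsum, ← tsum_mul_right]
    apply tsum_congr
    intro m
    have hpow : (om N ^ (c : ℕ)) ^ m * om N ^ (-((c : ℤ) * j)) =
        om N ^ ((c : ℤ) * ((m : ℤ) - j)) := by
      rw [← zpow_natCast (om N ^ (c : ℕ)), ← zpow_natCast (om N), ← zpow_mul,
        ← zpow_add₀ (om_ne_zero N)]
      congr 1
      push_cast
      ring
    rw [mul_pow]
    linear_combination ((p : ℂ) ^ m / (Nat.factorial m : ℂ)) * hpow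
  simp_rw [step1]
  rw [← Summable.tsum_finsetSum (fun c _ => summable_om N hN p _)]
  have step3 : ∀ m : ℕ, (∑ c : Fin N, (p : ℂ) ^ m / (Nat.factorial m : ℂ) *
      om N ^ ((c : ℤ) * ((m : ℤ) - j))) =
      (p : ℂ) ^ m / (Nat.factorial m : ℂ) *
        (if (N : ℤ) ∣ ((m : ℤ) - j) then (N : ℂ) else 0) := by
    intro m
    rw [← Finset.mul_sum, sum_om N hN]
  rw [tsum_congr step3]
  have hinj : Function.Injective (fun q : ℕ => j + q * N) := by
    intro a b hab
    simp only at hab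
    exact Nat.eq_of_mul_eq_mul_right hN (Nat.add_left_cancel hab)
  rw [← Function.Injective.tsum_eq hinj]
  · apply tsum_congr
    intro q
    have hd : (N : ℤ) ∣ ((j + q * N : ℕ) : ℤ) - j := ⟨q, by push_cast; ring⟩
    rw [if_pos hd]
    ring
  · intro m hm
    simp only [Function.mem_support] at hm
    have hdvd : (N : ℤ) ∣ ((m : ℤ) - j) := by
      by_contra h
      rw [if_neg h, mul_zero] at hm
      exact hm rfl
    have hmod : j % N = m % N := Nat.modEq_iff_dvd.2 hdvd
    refine ⟨m / N, ?_⟩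
    have h1 := Nat.mod_add_div m N
    have h2 : N * (m / N) = (m / N) * N := Nat.mul_comm _ _
    have h3 : j % N = j := Nat.mod_eq_of_lt hj
    simp only
    omega

lemma key_sum (N : ℕ) (hN : 0 < N) (μ : Fin N → ℂ) (hμ : ∀ j, μ j ≠ 0) (a b : ℕ) :
    (∑ l : Fin N, ∑ k : Fin N, om N ^ ((l : ℤ) * a) *
        ((1 / (N : ℂ)) * ∑ j : Fin N, om N ^ ((j : ℤ) * ((k : ℤ) - (l : ℤ))) / μ j) *
        om N ^ (-((k : ℤ) * b))) =
      if (N : ℤ) ∣ ((b : ℤ) - a) then (N : ℂ) / μ ⟨b % N, Nat.mod_lt b hN⟩ else 0 := by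
  have hterm : ∀ l k : Fin N,
      om N ^ ((l : ℤ) * a) *
        ((1 / (N : ℂ)) * ∑ j : Fin N, om N ^ ((j : ℤ) * ((k : ℤ) - (l : ℤ))) / μ j) *
        om N ^ (-((k : ℤ) * b)) =
      ∑ j : Fin N, (1 / (N : ℂ)) *
        (om N ^ ((l : ℤ) * ((a : ℤ) - j)) * om N ^ ((k : ℤ) * ((j : ℤ) - b)) / μ j) := by
    intro l k
    rw [Finset.mul_sum, Finset.mul_sum, Finset.sum_mul]
    apply Finset.sum_congr rfl
    intro j _
    have hz : om N ^ ((l : ℤ) * a) * om N ^ ((j : ℤ) * ((k : ℤ) - (l : ℤ))) *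
        om N ^ (-((k : ℤ) * b)) =
        om N ^ ((l : ℤ) * ((a : ℤ) - j)) * om N ^ ((k : ℤ) * ((j : ℤ) - b)) := by
      rw [← zpow_add₀ (om_ne_zero N), ← zpow_add₀ (om_ne_zero N), ← zpow_add₀ (om_ne_zero N)]
      congr 1
      ring
    linear_combination (1 / ((N : ℂ) * μ j)) * hz
  simp_rw [hterm]
  have h2 : ∀ l : Fin N, (∑ k : Fin N, ∑ j : Fin N, (1 / (N : ℂ)) *
      (om N ^ ((l : ℤ) * ((a : ℤ) - j)) * om N ^ ((k : ℤ) * ((j : ℤ) - b)) / μ j)) =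
      ∑ j : Fin N, (1 / (N : ℂ)) * (om N ^ ((l : ℤ) * ((a : ℤ) - j)) *
        (∑ k : Fin N, om N ^ ((k : ℤ) * ((j : ℤ) - b))) / μ j) := by
    intro l
    rw [Finset.sum_comm]
    refine Finset.sum_congr rfl fun j _ => ?_
    have he : ∀ k : Fin N, (1 / (N : ℂ)) *
        (om N ^ ((l : ℤ) * ((a : ℤ) - j)) * om N ^ ((k : ℤ) * ((j : ℤ) - b)) / μ j) =
        ((1 / (N : ℂ)) * om N ^ ((l : ℤ) * ((a : ℤ) - j)) / μ j) *
          om N ^ ((k : ℤ) * ((j : ℤ) - b)) := fun k => by ring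
    simp_rw [he, ← Finset.mul_sum]
    ring
  simp_rw [h2]
  rw [Finset.sum_comm]
  have h3 : ∀ j : Fin N, (∑ l : Fin N, (1 / (N : ℂ)) * (om N ^ ((l : ℤ) * ((a : ℤ) - j)) *
      (∑ k : Fin N, om N ^ ((k : ℤ) * ((j : ℤ) - b))) / μ j)) =
      (1 / (N : ℂ)) * ((if (N : ℤ) ∣ ((a : ℤ) - j) then (N : ℂ) else 0) *
        (if (N : ℤ) ∣ ((j : ℤ) - b) then (N : ℂ) else 0) / μ j) := by
    intro j
    have he : ∀ l : Fin N, (1 / (N : ℂ)) * (om N ^ ((l : ℤ) * ((a : ℤ) - j)) *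
        (∑ k : Fin N, om N ^ ((k : ℤ) * ((j : ℤ) - b))) / μ j) =
        ((1 / (N : ℂ)) * ((∑ k : Fin N, om N ^ ((k : ℤ) * ((j : ℤ) - b))) / μ j)) *
          om N ^ ((l : ℤ) * ((a : ℤ) - j)) := fun l => by ring
    simp_rw [he, ← Finset.mul_sum, sum_om N hN]
    ring
  simp_rw [h3]
  set j₀ : Fin N := ⟨b % N, Nat.mod_lt b hN⟩ with hj₀
  rw [Finset.sum_eq_single j₀]
  · have hd2 : (N : ℤ) ∣ ((j₀ : ℤ) - b) := by
      refine ⟨-(((b / N : ℕ)) : ℤ), ?_⟩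
      have h4 : ((b % N : ℕ) : ℤ) + (N : ℤ) * (((b / N : ℕ)) : ℤ) = (b : ℤ) := by
        exact_mod_cast Nat.mod_add_div b N
      show ((b % N : ℕ) : ℤ) - b = (N : ℤ) * -(((b / N : ℕ)) : ℤ)
      linarith
    rw [if_pos hd2]
    have hiff : (N : ℤ) ∣ ((a : ℤ) - (j₀ : ℤ)) ↔ (N : ℤ) ∣ ((b : ℤ) - a) := by
      constructor
      · intro h
        have := dvd_add h hd2
        have h6 : (a : ℤ) - j₀ + ((j₀ : ℤ) - b) = -((b:ℤ) - a) := by ring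
        rw [h6] at this
        exact (dvd_neg.1 this)
      · intro h
        have := dvd_add (dvd_neg.2 h) (dvd_neg.2 hd2)
        have h6 : -((b:ℤ) - a) + -((j₀ : ℤ) - b) = (a : ℤ) - j₀ := by ring
        rw [h6] at this
        exact this
    by_cases hc : (N : ℤ) ∣ ((b : ℤ) - a)
    · rw [if_pos (hiff.2 hc), if_pos hc]
      have hNne : (N : ℂ) ≠ 0 := Nat.cast_ne_zero.2 hN.ne'
      field_simp
    · rw [if_neg (fun h => hc (hiff.1 h)), if_neg hc]
      simp
  · intro j _ hj
    have : ¬ (N : ℤ) ∣ ((j : ℤ) - b) := by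
      intro h
      apply hj
      have hmod : (j : ℕ) % N = b % N := (Nat.modEq_iff_dvd.2 h).symm
      have : (j : ℕ) = b % N := by
        rw [← hmod, Nat.mod_eq_of_lt j.isLt]
      exact Fin.ext (by simp [hj₀, this])
    rw [if_neg this]
    simp
  · intro h
    exact absurd (Finset.mem_univ j₀) h

lemma om_eq_of_dvd (N : ℕ) (hN : 0 < N) {x y : ℤ} (h : (N : ℤ) ∣ x - y) :
    om N ^ x = om N ^ y := by
  obtain ⟨q, hq⟩ := h
  have hx : x = y + (N : ℤ) * q := by linarith
  rw [hx, zpow_add₀ (om_ne_zero N), zpow_mul, (om_zpow_eq_one N hN N).2 dvd_rfl, one_zpow, mul_one]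

lemma fin_add_dvd (N : ℕ) (hN : 0 < N) (c l : Fin N) :
    (N : ℤ) ∣ (((c + l : Fin N) : ℕ) : ℤ) - ((c : ℕ) + (l : ℕ) : ℤ) := by
  have hv : ((c + l : Fin N) : ℕ) = ((c : ℕ) + (l : ℕ)) % N := Fin.val_add c l
  refine ⟨-((((c : ℕ) + (l : ℕ)) / N : ℕ) : ℤ), ?_⟩
  have h4 : ((((c : ℕ) + (l : ℕ)) % N : ℕ) : ℤ) +
      (N : ℤ) * ((((c : ℕ) + (l : ℕ)) / N : ℕ) : ℤ) = (((c : ℕ) + (l : ℕ) : ℕ) : ℤ) := by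
    exact_mod_cast Nat.mod_add_div ((c : ℕ) + (l : ℕ)) N
  rw [hv]
  push_cast at h4 ⊢
  linarith

lemma shift_sum (N : ℕ) (hN : 0 < N) (p : ℝ) (l : Fin N) (j : ℕ) :
    ∑ k : Fin N, Complex.exp ((p : ℂ) * om N ^ ((k : ℤ) - (l : ℤ))) * om N ^ (-((k : ℤ) * j)) =
    om N ^ (-((l : ℤ) * j)) *
      ∑ c : Fin N, Complex.exp ((p : ℂ) * om N ^ (c : ℕ)) * om N ^ (-((c : ℤ) * j)) := by
  haveI : NeZero N := ⟨hN.ne'⟩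
  rw [Finset.mul_sum]
  refine (Fintype.sum_equiv (Equiv.addRight l)
    (fun c => om N ^ (-((l : ℤ) * j)) * (Complex.exp ((p : ℂ) * om N ^ (c : ℕ)) *
      om N ^ (-((c : ℤ) * j))))
    (fun k => Complex.exp ((p : ℂ) * om N ^ ((k : ℤ) - (l : ℤ))) * om N ^ (-((k : ℤ) * j)))
    (fun c => ?_)).symm
  have hd := fin_add_dvd N hN c l
  have hA : om N ^ ((((c + l : Fin N) : ℕ) : ℤ) - (l : ℤ)) = om N ^ ((c : ℕ) : ℤ) := by
    apply om_eq_of_dvd N hN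
    have : (((c + l : Fin N) : ℕ) : ℤ) - (l : ℤ) - ((c : ℕ) : ℤ) =
        (((c + l : Fin N) : ℕ) : ℤ) - ((c : ℕ) + (l : ℕ) : ℤ) := by ring
    rw [this]
    exact hd
  have hB : om N ^ (-((((c + l : Fin N) : ℕ) : ℤ) * j)) =
      om N ^ (-((c : ℤ) * j)) * om N ^ (-((l : ℤ) * j)) := by
    rw [← zpow_add₀ (om_ne_zero N)]
    apply om_eq_of_dvd N hN
    have : -((((c + l : Fin N) : ℕ) : ℤ) * j) - (-((c : ℤ) * j) + -((l : ℤ) * j)) =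
        (((c : ℕ) + (l : ℕ) : ℤ) - (((c + l : Fin N) : ℕ) : ℤ)) * j := by ring
    rw [this]
    exact Dvd.dvd.mul_right (dvd_sub_comm.mp hd) _
  simp only [Equiv.coe_addRight]
  rw [hA, hB]
  rw [zpow_natCast]
  ring

lemma BC_one (N : ℕ) (hN : 0 < N) (p : ℝ) (μ : Fin N → ℂ) (hμ0 : ∀ j, μ j ≠ 0)
    (hmu : ∀ j : Fin N, (Real.exp (-p) : ℂ) *
      ∑ c : Fin N, Complex.exp ((p : ℂ) * om N ^ (c : ℕ)) * om N ^ (-((c : ℤ) * (j : ℕ))) = μ j)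
    (B : Matrix (Fin N) (Fin N) ℂ)
    (hB : ∀ k l : Fin N, B k l = (Real.exp (-p) : ℂ) *
      Complex.exp ((p : ℂ) * om N ^ ((l : ℤ) - (k : ℤ)))) :
    B * (Matrix.of fun k m : Fin N =>
        (1 / (N : ℂ)) * ∑ j : Fin N, om N ^ ((j : ℤ) * ((m : ℤ) - (k : ℤ))) / μ j) = 1 := by
  ext l m
  rw [Matrix.mul_apply]
  have hterm : ∀ k : Fin N, B l k * ((1 / (N : ℂ)) *
      ∑ j : Fin N, om N ^ ((j : ℤ) * ((m : ℤ) - (k : ℤ))) / μ j) =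
      ∑ j : Fin N, (1 / (N : ℂ)) * (om N ^ ((j : ℤ) * (m : ℤ)) / μ j) *
        ((Real.exp (-p) : ℂ) * (Complex.exp ((p : ℂ) * om N ^ ((k : ℤ) - (l : ℤ))) *
          om N ^ (-((k : ℤ) * (j : ℕ))))) := by
    intro k
    rw [hB, Finset.mul_sum, Finset.mul_sum]
    apply Finset.sum_congr rfl
    intro j _
    have hz : om N ^ ((j : ℤ) * (m : ℤ)) * om N ^ (-((k : ℤ) * (j : ℕ))) =
        om N ^ ((j : ℤ) * ((m : ℤ) - (k : ℤ))) := by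
      rw [← zpow_add₀ (om_ne_zero N)]
      congr 1
      push_cast
      ring
    linear_combination (-(Real.exp (-p) : ℂ) *
      Complex.exp ((p : ℂ) * om N ^ ((k : ℤ) - (l : ℤ))) / ((N : ℂ) * μ j)) * hz
  simp only [Matrix.of_apply]
  simp_rw [hterm]
  rw [Finset.sum_comm]
  have hinner : ∀ j : Fin N, (∑ k : Fin N, (1 / (N : ℂ)) * (om N ^ ((j : ℤ) * (m : ℤ)) / μ j) *
      ((Real.exp (-p) : ℂ) * (Complex.exp ((p : ℂ) * om N ^ ((k : ℤ) - (l : ℤ))) *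
        om N ^ (-((k : ℤ) * (j : ℕ)))))) =
      (1 / (N : ℂ)) * om N ^ ((j : ℤ) * ((m : ℤ) - (l : ℤ))) := by
    intro j
    rw [← Finset.mul_sum, ← Finset.mul_sum, shift_sum N hN p l (j : ℕ)]
    have := hmu j
    have hz2 : om N ^ ((j : ℤ) * (m : ℤ)) * (om N ^ (-((l : ℤ) * (j : ℕ)))) =
        om N ^ ((j : ℤ) * ((m : ℤ) - (l : ℤ))) := by
      rw [← zpow_add₀ (om_ne_zero N)]
      congr 1
      push_cast
      ring
    calc (1 / (N : ℂ)) * (om N ^ ((j : ℤ) * (m : ℤ)) / μ j) *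
        ((Real.exp (-p) : ℂ) * (om N ^ (-((l : ℤ) * (j : ℕ))) *
          ∑ c : Fin N, Complex.exp ((p : ℂ) * om N ^ (c : ℕ)) * om N ^ (-((c : ℤ) * (j : ℕ)))))
        = (1 / (N : ℂ)) * (om N ^ ((j : ℤ) * (m : ℤ)) / μ j) *
            (om N ^ (-((l : ℤ) * (j : ℕ))) * μ j) := by
          rw [← this]; ring
      _ = (1 / (N : ℂ)) * (om N ^ ((j : ℤ) * (m : ℤ)) * om N ^ (-((l : ℤ) * (j : ℕ)))) *
            (μ j / μ j) := by ring
      _ = (1 / (N : ℂ)) * om N ^ ((j : ℤ) * ((m : ℤ) - (l : ℤ))) := by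
          rw [div_self (hμ0 j), mul_one, hz2]
  simp_rw [hinner]
  rw [← Finset.mul_sum, sum_om N hN]
  rw [Matrix.one_apply]
  by_cases hlm : l = m
  · subst hlm
    rw [if_pos (by simp), if_pos rfl]
    have hNne : (N : ℂ) ≠ 0 := Nat.cast_ne_zero.2 hN.ne'
    field_simp
  · rw [if_neg, if_neg hlm, mul_zero]
    intro h
    apply hlm
    have hmod : (m : ℕ) % N = (l : ℕ) % N := by
      have := (Nat.modEq_iff_dvd (a := (l : ℕ)) (b := (m : ℕ)) (n := N)).2 ?_
      · exact this.symm
      · have : ((m : ℕ) : ℤ) - ((l : ℕ) : ℤ) = (m : ℤ) - (l : ℤ) := by push_cast; ring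
        rw [this]; exact h
    exact Fin.ext (by rw [← Nat.mod_eq_of_lt l.isLt, ← Nat.mod_eq_of_lt m.isLt, hmod])

noncomputable def cc (p : ℝ) (m : ℕ) : ℝ :=
  Real.exp (-p / 2) * Real.sqrt p ^ m / Real.sqrt (Nat.factorial m)

lemma summable_lam (N : ℕ) (hN : 0 < N) (p : ℝ) (j : ℕ) :
    Summable (fun q : ℕ => (N : ℝ) * Real.exp (-p) * p ^ (j + q * N) /
      Nat.factorial (j + q * N)) := by
  have h0 : Summable (fun m : ℕ => (N : ℝ) * Real.exp (-p) * (p ^ m / Nat.factorial m)) :=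
    (Real.summable_pow_div_factorial p).mul_left _
  have hinj : Function.Injective (fun q : ℕ => j + q * N) := by
    intro a b hab
    simp only at hab
    exact Nat.eq_of_mul_eq_mul_right hN (Nat.add_left_cancel hab)
  exact (h0.comp_injective hinj).congr (fun q => by simp [Function.comp, mul_div_assoc])

lemma exp_half_sq (p : ℝ) : Real.exp (-p / 2) * Real.exp (-p / 2) = Real.exp (-p) := by
  rw [← Real.exp_add]; norm_num

lemma sqrt_lam_eq (N : ℕ) (p : ℝ) (hp : 0 < p) (m : ℕ) :
    Real.sqrt ((N : ℝ) * Real.exp (-p) * p ^ m / Nat.factorial m) =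
      Real.sqrt N * cc p m := by
  have hsq : (N : ℝ) * Real.exp (-p) * p ^ m / Nat.factorial m =
      (Real.sqrt N * cc p m) ^ 2 := by
    have h1 : Real.sqrt (N : ℝ) ^ 2 = (N : ℝ) := Real.sq_sqrt (by positivity)
    have h2 : Real.sqrt p ^ 2 = p := Real.sq_sqrt hp.le
    have h3 : Real.sqrt (Nat.factorial m : ℝ) ^ 2 = (Nat.factorial m : ℝ) :=
      Real.sq_sqrt (by positivity)
    have h4 : Real.exp (-p / 2) ^ 2 = Real.exp (-p) := by
      rw [sq, exp_half_sq]
    rw [mul_pow, h1, cc, div_pow, mul_pow, h3, h4, ← pow_mul, mul_comm m 2, pow_mul, h2]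
    ring
  rw [hsq, Real.sqrt_sq (mul_nonneg (Real.sqrt_nonneg _) (by rw [cc]; positivity))]

theorem stmt10 (N : ℕ) (hN : 0 < N) (p : ℝ) (hp : 0 < p)
    (T : Fin N → ℕ → ℂ)
    (hT : ∀ (k : Fin N) (n : ℕ),
      T k n = ((Real.exp (-p / 2) * Real.sqrt p ^ n / Real.sqrt (Nat.factorial n) : ℝ) : ℂ) *
        Complex.exp (-(2 * Real.pi * Complex.I) * (k : ℂ) * (n : ℂ) / (N : ℂ)))
    (B : Matrix (Fin N) (Fin N) ℂ)
    (hB : ∀ k l : Fin N, B k l = (Real.exp (-p) : ℂ) *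
      Complex.exp ((p : ℂ) * Complex.exp (2 * Real.pi * Complex.I * ((l : ℂ) - (k : ℂ)) / (N : ℂ))))
    (lam : ℕ → ℝ)
    (hlam : ∀ n : ℕ, lam n = (N : ℝ) * Real.exp (-p) * p ^ n / Nat.factorial n)
    (lamhat : ℕ → ℝ)
    (hlamhat : ∀ j : ℕ, lamhat j = ∑' q : ℕ, lam (j + q * N))
    (ν : ℕ → ℝ)
    (hν : ∀ j : ℕ, ν j = ∑' u : ℕ,
      (Nat.factorial j : ℝ) * p ^ ((u + 1) * N) / Nat.factorial (j + (u + 1) * N)) :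
    (∀ m n : ℕ,
      (∑ l : Fin N, ∑ k : Fin N, (starRingEnd ℂ) (T l m) * (B⁻¹ l k) * T k n) =
        if n % N = m % N then ((Real.sqrt (lam m * lam n) / lamhat (n % N) : ℝ) : ℂ) else 0) ∧
    (∀ j s t : ℕ, j ≤ N - 1 →
      (∑ l : Fin N, ∑ k : Fin N,
          (starRingEnd ℂ) (T l (j + s * N)) * (B⁻¹ l k) * T k (j + t * N)) =
        (((Nat.factorial j : ℝ) * Real.sqrt p ^ ((s + t) * N) /
          (Real.sqrt (Nat.factorial (j + s * N)) * Real.sqrt (Nat.factorial (j + t * N)) *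
            (1 + ν j)) : ℝ) : ℂ)) := by
  have hNC : (N : ℂ) ≠ 0 := Nat.cast_ne_zero.2 hN.ne'
  have hlam' : ∀ j : ℕ, lamhat j = ∑' q : ℕ,
      (N : ℝ) * Real.exp (-p) * p ^ (j + q * N) / Nat.factorial (j + q * N) := by
    intro j
    rw [hlamhat]
    exact tsum_congr fun q => by rw [hlam]
  have hsum : ∀ j : ℕ, Summable (fun q : ℕ =>
      (N : ℝ) * Real.exp (-p) * p ^ (j + q * N) / Nat.factorial (j + q * N)) :=
    fun j => summable_lam N hN p j
  have hpos : ∀ j : ℕ, 0 < lamhat j := by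
    intro j
    rw [hlam' j]
    exact Summable.tsum_pos (hsum j) (fun q => by positivity) 0 (by positivity)
  set μf : Fin N → ℂ := fun j => ((lamhat (j : ℕ) : ℝ) : ℂ) with hμf
  have hμ0 : ∀ j : Fin N, μf j ≠ 0 := fun j => by
    simp only [hμf, ne_eq, Complex.ofReal_eq_zero]
    exact (hpos _).ne'
  have hmu : ∀ j : Fin N, (Real.exp (-p) : ℂ) *
      ∑ c : Fin N, Complex.exp ((p : ℂ) * om N ^ (c : ℕ)) * om N ^ (-((c : ℤ) * (j : ℕ))) =
      μf j := by
    intro j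
    simp only [hμf]
    rw [muD N hN p (j : ℕ) j.isLt, hlam' (j : ℕ), Complex.ofReal_tsum, ← tsum_mul_left]
    apply tsum_congr
    intro q
    push_cast
    ring
  have hB' : ∀ k l : Fin N, B k l = (Real.exp (-p) : ℂ) *
      Complex.exp ((p : ℂ) * om N ^ ((l : ℤ) - (k : ℤ))) := by
    intro k l
    rw [hB, om_zpow]
    congr 2
    push_cast
    ring
  have hBinv : B⁻¹ = Matrix.of fun k m : Fin N =>
      (1 / (N : ℂ)) * ∑ j : Fin N, om N ^ ((j : ℤ) * ((m : ℤ) - (k : ℤ))) / μf j :=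
    Matrix.inv_eq_right_inv (BC_one N hN p μf hμ0 hmu B hB')
  have hTc : ∀ (l : Fin N) (m : ℕ), (starRingEnd ℂ) (T l m) =
      ((cc p m : ℝ) : ℂ) * om N ^ ((l : ℤ) * m) := by
    intro l m
    rw [hT, map_mul, Complex.conj_ofReal, ← Complex.exp_conj, om_zpow, cc]
    congr 2
    simp only [map_div₀, map_mul, map_neg, Complex.conj_I, Complex.conj_ofReal,
      map_natCast, map_ofNat]
    push_cast
    ring
  have hTn : ∀ (k : Fin N) (n : ℕ), T k n = ((cc p n : ℝ) : ℂ) * om N ^ (-((k : ℤ) * n)) := by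
    intro k n
    rw [hT, om_zpow, cc]
    congr 2
    push_cast
    ring
  have hS : ∀ m n : ℕ,
      (∑ l : Fin N, ∑ k : Fin N, (starRingEnd ℂ) (T l m) * (B⁻¹ l k) * T k n) =
      if (N : ℤ) ∣ ((n : ℤ) - m) then
        ((cc p m : ℝ) : ℂ) * ((cc p n : ℝ) : ℂ) *
          ((N : ℂ) / ((lamhat (n % N) : ℝ) : ℂ)) else 0 := by
    intro m n
    rw [hBinv]
    have hterm : ∀ l k : Fin N, (starRingEnd ℂ) (T l m) *
        (Matrix.of fun k m : Fin N =>
          (1 / (N : ℂ)) * ∑ j : Fin N, om N ^ ((j : ℤ) * ((m : ℤ) - (k : ℤ))) / μf j) l k *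
        T k n =
        ((cc p m : ℝ) : ℂ) * ((cc p n : ℝ) : ℂ) *
          (om N ^ ((l : ℤ) * m) *
            ((1 / (N : ℂ)) * ∑ j : Fin N, om N ^ ((j : ℤ) * ((k : ℤ) - (l : ℤ))) / μf j) *
            om N ^ (-((k : ℤ) * n))) := by
      intro l k
      rw [hTc, hTn]
      simp only [Matrix.of_apply]
      ring
    simp_rw [hterm, ← Finset.mul_sum]
    rw [key_sum N hN μf hμ0 m n, mul_ite, mul_zero]
  constructor
  · intro m n
    rw [hS m n]
    by_cases h : n % N = m % N
    · have hdvd : (N : ℤ) ∣ ((n : ℤ) - m) := (Nat.modEq_iff_dvd (n := N)).1 h.symm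
      rw [if_pos hdvd, if_pos h]
      have hr : Real.sqrt (lam m * lam n) = (N : ℝ) * cc p m * cc p n := by
        rw [hlam m, hlam n, Real.sqrt_mul (by positivity), sqrt_lam_eq N p hp m,
          sqrt_lam_eq N p hp n]
        have h2 : Real.sqrt (N : ℝ) * Real.sqrt (N : ℝ) = (N : ℝ) :=
          Real.mul_self_sqrt (by positivity)
        linear_combination (cc p m * cc p n) * h2
      rw [hr]
      push_cast
      have : (lamhat (n % N) : ℂ) ≠ 0 := by
        simp only [ne_eq, Complex.ofReal_eq_zero]
        exact (hpos _).ne'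
      field_simp
    · have hdvd : ¬ (N : ℤ) ∣ ((n : ℤ) - m) := fun hd => h ((Nat.modEq_iff_dvd (n := N)).2 hd).symm
      rw [if_neg hdvd, if_neg h]
  · intro j s t hj
    have hjN : j < N := by omega
    set m := j + s * N with hm
    set n := j + t * N with hn
    have hnm : n % N = j := by
      rw [hn, Nat.add_mul_mod_self_right, Nat.mod_eq_of_lt hjN]
    have hdvd : (N : ℤ) ∣ ((n : ℤ) - m) := by
      refine ⟨(t : ℤ) - s, ?_⟩
      rw [hm, hn]
      push_cast
      ring
    rw [hS m n, if_pos hdvd, hnm]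
    -- split lamhat j
    have hE' : Real.exp (-p) = Real.exp (-p / 2) * Real.exp (-p / 2) := (exp_half_sq p).symm
    have hν0 : 0 ≤ ν j := by
      rw [hν]
      exact tsum_nonneg fun u => by positivity
    have hsplit : lamhat j = (N : ℝ) * Real.exp (-p) * p ^ j / Nat.factorial j * (1 + ν j) := by
      rw [hlam' j, Summable.tsum_eq_zero_add (hsum j)]
      have h0 : (N : ℝ) * Real.exp (-p) * p ^ (j + 0 * N) / Nat.factorial (j + 0 * N) =
          (N : ℝ) * Real.exp (-p) * p ^ j / Nat.factorial j := by norm_num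
      have h1 : (∑' u : ℕ, (N : ℝ) * Real.exp (-p) * p ^ (j + (u + 1) * N) /
          Nat.factorial (j + (u + 1) * N)) =
          (N : ℝ) * Real.exp (-p) * p ^ j / Nat.factorial j * ν j := by
        rw [hν, ← tsum_mul_left]
        apply tsum_congr
        intro u
        have hfj : (Nat.factorial j : ℝ) ≠ 0 := by positivity
        rw [pow_add]
        field_simp
      rw [h0, h1]
      ring
    have hpow : Real.sqrt p ^ m * Real.sqrt p ^ n = p ^ j * Real.sqrt p ^ ((s + t) * N) := by
      rw [← pow_add]
      have hmn : m + n = 2 * j + (s + t) * N := by rw [hm, hn]; ring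
      rw [hmn, pow_add, pow_mul, Real.sq_sqrt hp.le]
    have hreal : cc p m * cc p n * ((N : ℝ) / lamhat j) =
        (Nat.factorial j : ℝ) * Real.sqrt p ^ ((s + t) * N) /
          (Real.sqrt (Nat.factorial m) * Real.sqrt (Nat.factorial n) * (1 + ν j)) := by
      have hfm : Real.sqrt (Nat.factorial m : ℝ) ≠ 0 := by positivity
      have hfn : Real.sqrt (Nat.factorial n : ℝ) ≠ 0 := by positivity
      have hfj : (Nat.factorial j : ℝ) ≠ 0 := by positivity
      have h1ν : (1 : ℝ) + ν j ≠ 0 := by positivity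
      have hNR : (N : ℝ) ≠ 0 := by positivity
      have hpj : p ^ j ≠ 0 := by positivity
      have hEne : Real.exp (-p / 2) ≠ 0 := Real.exp_ne_zero _
      calc cc p m * cc p n * ((N : ℝ) / lamhat j)
          = (Real.exp (-p / 2) * Real.exp (-p / 2)) * (Real.sqrt p ^ m * Real.sqrt p ^ n) *
              (N : ℝ) / (Real.sqrt (Nat.factorial m) * Real.sqrt (Nat.factorial n) *
                lamhat j) := by
            rw [cc, cc]; ring
        _ = (Real.exp (-p / 2) * Real.exp (-p / 2)) * (p ^ j * Real.sqrt p ^ ((s + t) * N)) *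
              (N : ℝ) / (Real.sqrt (Nat.factorial m) * Real.sqrt (Nat.factorial n) *
                ((N : ℝ) * (Real.exp (-p / 2) * Real.exp (-p / 2)) * p ^ j /
                  Nat.factorial j * (1 + ν j))) := by
            rw [hpow, hsplit, hE']
        _ = (Nat.factorial j : ℝ) * Real.sqrt p ^ ((s + t) * N) /
              (Real.sqrt (Nat.factorial m) * Real.sqrt (Nat.factorial n) * (1 + ν j)) := by
            field_simp
    rw [show ((cc p m : ℝ) : ℂ) * ((cc p n : ℝ) : ℂ) * ((N : ℂ) / ((lamhat j : ℝ) : ℂ)) =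
        ((cc p m * cc p n * ((N : ℝ) / lamhat j) : ℝ) : ℂ) by push_cast; ring, hreal]
end

section
/- For n, m with 0 ≤ n, m ≤ N-1, the matrix elements of P_S in the Fock basis satisfy ⟨m|P_S|n⟩ = δ_{nm} / (1+ν_n(p,N)), where ν_n(p,N) = ∑_{u=1}^∞ n! p^{uN}/(n+uN)!. -/
open Complex Finset Function

namespace Stmt13Aux

noncomputable def eps (N : ℕ) (a : ℤ) : ℂ := Complex.exp (2 * Real.pi * Complex.I * a / N)

lemma eps_add (N : ℕ) (a b : ℤ) : eps N (a + b) = eps N a * eps N b := by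
  rw [eps, eps, eps, ← Complex.exp_add]
  congr 1
  push_cast
  ring

lemma eps_zero (N : ℕ) : eps N 0 = 1 := by simp [eps]

lemma eps_neg (N : ℕ) (a : ℤ) : eps N (-a) = (eps N a)⁻¹ := by
  rw [eps, eps, ← Complex.exp_neg]
  congr 1
  push_cast
  ring

lemma eps_nat_mul (N : ℕ) (k : ℕ) (a : ℤ) : eps N (k * a) = eps N a ^ k := by
  rw [eps, eps, ← Complex.exp_nat_mul]
  congr 1
  push_cast
  ring

lemma eps_N_mul (N : ℕ) (hN : 0 < N) (t : ℤ) : eps N (N * t) = 1 := by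
  have hNne : (N : ℂ) ≠ 0 := by exact_mod_cast hN.ne'
  have : (2 * Real.pi * Complex.I * ((N : ℤ) * t : ℤ) / N : ℂ) = t * (2 * Real.pi * Complex.I) := by
    push_cast
    field_simp
  rw [eps, this, Complex.exp_int_mul, Complex.exp_two_pi_mul_I, one_zpow]

lemma eps_congr (N : ℕ) (hN : 0 < N) {a b : ℤ} (h : a % N = b % N) : eps N a = eps N b := by
  have hd : (N : ℤ) ∣ a - b := Int.ModEq.dvd (Int.ModEq.symm h)
  obtain ⟨t, ht⟩ := hd
  have : a = b + N * t := by linarith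
  rw [this, eps_add, eps_N_mul N hN, mul_one]

end Stmt13Aux

namespace Stmt13Aux

lemma eps_eq_one_iff (N : ℕ) (hN : 0 < N) (c : ℤ) : eps N c = 1 ↔ (N : ℤ) ∣ c := by
  have hNne : (N : ℂ) ≠ 0 := by exact_mod_cast hN.ne'
  rw [eps, Complex.exp_eq_one_iff]
  constructor
  · rintro ⟨n, hn⟩
    refine ⟨n, ?_⟩
    rw [mul_comm]
    have h2 : (2 * Real.pi * Complex.I : ℂ) ≠ 0 := by
      simp [Real.pi_ne_zero, Complex.I_ne_zero]
    have : (c : ℂ) = n * N := by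
      field_simp at hn
      have := hn
      -- 2πI * c = n * (2πI) * N
      have h' : (2 * Real.pi * Complex.I : ℂ) * c = (2 * Real.pi * Complex.I) * (n * N) := by
        rw [this]; ring
      exact mul_left_cancel₀ h2 h'
    exact_mod_cast this
  · rintro ⟨t, ht⟩
    exact ⟨t, by rw [ht]; push_cast; field_simp⟩

lemma sum_eps (N : ℕ) (hN : 0 < N) (c : ℤ) :
    ∑ k : Fin N, eps N (k * c) = if (N : ℤ) ∣ c then (N : ℂ) else 0 := by
  have hterm : ∀ k : Fin N, eps N ((k : ℕ) * c) = eps N c ^ (k : ℕ) := fun k =>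
    eps_nat_mul N k c
  split_ifs with h
  · have h1 : eps N c = 1 := (eps_eq_one_iff N hN c).2 h
    simp [hterm, h1]
  · have h1 : eps N c ≠ 1 := fun hc => h ((eps_eq_one_iff N hN c).1 hc)
    have hNpow : eps N c ^ N = 1 := by
      rw [← eps_nat_mul, eps_eq_one_iff N hN]
      exact ⟨c, by push_cast; ring⟩
    calc ∑ k : Fin N, eps N (k * c) = ∑ k ∈ Finset.range N, eps N c ^ k := by
          rw [← Fin.sum_univ_eq_sum_range (fun k => eps N c ^ k) N]
          exact Finset.sum_congr rfl fun k _ => hterm k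
      _ = (eps N c ^ N - 1) / (eps N c - 1) := geom_sum_eq h1 N
      _ = 0 := by rw [hNpow]; simp

end Stmt13Aux

namespace Stmt13Aux

lemma eps_norm (N : ℕ) (a : ℤ) : ‖eps N a‖ = 1 := by
  have h : (2 * Real.pi * Complex.I * a / N : ℂ) = ((2 * Real.pi * a / N : ℝ) : ℂ) * Complex.I := by
    push_cast; ring
  rw [eps, h, Complex.norm_exp_ofReal_mul_I]

noncomputable def μ (N : ℕ) (p : ℝ) (j : ℕ) : ℝ :=
  ∑' u : ℕ, p ^ (j + u * N) / (Nat.factorial (j + u * N))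

lemma inj_aux (N : ℕ) (hN : 0 < N) (j : ℕ) : Function.Injective (fun u : ℕ => j + u * N) := by
  intro a b h
  simp only at h
  have h2 : a * N = b * N := by omega
  exact Nat.eq_of_mul_eq_mul_right hN h2

lemma summable_mu (N : ℕ) (hN : 0 < N) (p : ℝ) (j : ℕ) :
    Summable (fun u : ℕ => p ^ (j + u * N) / (Nat.factorial (j + u * N))) :=
  (Real.summable_pow_div_factorial p).comp_injective (inj_aux N hN j)

lemma mu_pos (N : ℕ) (hN : 0 < N) (p : ℝ) (hp : 0 < p) (j : ℕ) : 0 < μ N p j := by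
  refine Summable.tsum_pos (summable_mu N hN p j) (fun i => by positivity) 0 (by positivity)

lemma eig (N : ℕ) (hN : 0 < N) (p : ℝ) (hp : 0 < p) (j : ℕ) (hj : j < N) :
    ∑ l : Fin N, Complex.exp ((p : ℂ) * eps N ((l : ℕ) : ℤ)) * eps N (-(((l : ℕ) : ℤ) * j)) =
      (N : ℂ) * ((μ N p j : ℝ) : ℂ) := by
  have hsummand : ∀ (l : Fin N), Summable (fun s : ℕ =>
      ((p : ℂ) ^ s / (Nat.factorial s)) * eps N (((l : ℕ) : ℤ) * ((s : ℤ) - j))) := by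
    intro l
    apply Summable.of_norm
    have : (fun s : ℕ => ‖((p : ℂ) ^ s / (Nat.factorial s)) * eps N (((l : ℕ) : ℤ) * ((s : ℤ) - j))‖)
        = fun s : ℕ => |p| ^ s / (Nat.factorial s) := by
      funext s
      rw [norm_mul]
      have h1 : ‖eps N (((l : ℕ) : ℤ) * ((s : ℤ) - j))‖ = 1 := eps_norm N _
      rw [h1, mul_one, norm_div, norm_pow]
      simp [Complex.norm_natCast]
    rw [this]
    exact Real.summable_pow_div_factorial |p|
  have hexp : ∀ l : Fin N, Complex.exp ((p : ℂ) * eps N ((l : ℕ) : ℤ)) * eps N (-(((l : ℕ) : ℤ) * j))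
      = ∑' s : ℕ, ((p : ℂ) ^ s / (Nat.factorial s)) * eps N (((l : ℕ) : ℤ) * ((s : ℤ) - j)) := by
    intro l
    rw [Complex.exp_eq_exp_ℂ, NormedSpace.exp_eq_tsum_div, ← tsum_mul_right]
    congr 1
    funext s
    rw [mul_pow]
    have h1 : (eps N ((l : ℕ) : ℤ)) ^ s = eps N ((s : ℤ) * ((l : ℕ) : ℤ)) := (eps_nat_mul N s _).symm
    rw [h1]
    have h2 : eps N ((s : ℤ) * ((l : ℕ) : ℤ)) * eps N (-(((l : ℕ) : ℤ) * j))
        = eps N (((l : ℕ) : ℤ) * ((s : ℤ) - j)) := by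
      rw [← eps_add]
      congr 1
      ring
    calc (p : ℂ) ^ s * eps N ((s : ℤ) * ((l : ℕ) : ℤ)) / (Nat.factorial s) * eps N (-(((l : ℕ) : ℤ) * j))
        = ((p : ℂ) ^ s / (Nat.factorial s)) * (eps N ((s : ℤ) * ((l : ℕ) : ℤ)) * eps N (-(((l : ℕ) : ℤ) * j))) := by ring
      _ = _ := by rw [h2]
  calc ∑ l : Fin N, Complex.exp ((p : ℂ) * eps N ((l : ℕ) : ℤ)) * eps N (-(((l : ℕ) : ℤ) * j))
      = ∑ l : Fin N, ∑' s : ℕ, ((p : ℂ) ^ s / (Nat.factorial s)) * eps N (((l : ℕ) : ℤ) * ((s : ℤ) - j)) :=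
        Finset.sum_congr rfl fun l _ => hexp l
    _ = ∑' s : ℕ, ∑ l : Fin N, ((p : ℂ) ^ s / (Nat.factorial s)) * eps N (((l : ℕ) : ℤ) * ((s : ℤ) - j)) := by
        rw [Summable.tsum_finsetSum (fun l _ => hsummand l)]
    _ = ∑' s : ℕ, ((p : ℂ) ^ s / (Nat.factorial s)) * (if (N : ℤ) ∣ ((s : ℤ) - j) then (N : ℂ) else 0) := by
        congr 1
        funext s
        rw [← Finset.mul_sum, sum_eps N hN]
    _ = (N : ℂ) * ((μ N p j : ℝ) : ℂ) := by
        rw [← Function.Injective.tsum_eq (inj_aux N hN j) (f := fun s : ℕ =>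
          ((p : ℂ) ^ s / (Nat.factorial s)) * (if (N : ℤ) ∣ ((s : ℤ) - j) then (N : ℂ) else 0)) ?_]
        · have : ∀ u : ℕ, ((p : ℂ) ^ (j + u * N) / (Nat.factorial (j + u * N))) *
              (if (N : ℤ) ∣ (((j + u * N : ℕ) : ℤ) - j) then (N : ℂ) else 0)
              = (N : ℂ) * ((p ^ (j + u * N) / (Nat.factorial (j + u * N)) : ℝ) : ℂ) := by
            intro u
            rw [if_pos ⟨u, by push_cast; ring⟩]
            push_cast
            ring
          simp only [this]
          rw [tsum_mul_left, μ, Complex.ofReal_tsum]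
        · intro s hs
          simp only [Function.mem_support, ne_eq] at hs
          by_cases hdvd : (N : ℤ) ∣ ((s : ℤ) - j)
          · obtain ⟨t, ht⟩ := hdvd
            have hsnn : (0 : ℤ) ≤ (s : ℤ) := Int.ofNat_nonneg s
            have hjN : (j : ℤ) < (N : ℤ) := by exact_mod_cast hj
            have htnn : 0 ≤ t := by
              by_contra htn
              push_neg at htn
              have h1 : t ≤ -1 := by omega
              have h2 : (N : ℤ) * t ≤ (N : ℤ) * (-1) :=
                mul_le_mul_of_nonneg_left h1 (by positivity)
              linarith
            refine ⟨t.toNat, ?_⟩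
            have ht' : ((t.toNat : ℕ) : ℤ) = t := Int.toNat_of_nonneg htnn
            have hz : (s : ℤ) = (j : ℤ) + (t.toNat : ℤ) * (N : ℤ) := by
              rw [ht']; linarith
            simp only
            exact_mod_cast hz.symm
          · exact absurd (by rw [if_neg hdvd, mul_zero]) hs

end Stmt13Aux

namespace Stmt13Aux

noncomputable def lam (N : ℕ) (p : ℝ) (j : ℕ) : ℝ := (N : ℝ) * Real.exp (-p) * μ N p j

lemma lam_pos (N : ℕ) (hN : 0 < N) (p : ℝ) (hp : 0 < p) (j : ℕ) : 0 < lam N p j := by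
  have h1 := mu_pos N hN p hp j
  have h2 : (0:ℝ) < N := by exact_mod_cast hN
  have h3 : (0:ℝ) < Real.exp (-p) := Real.exp_pos _
  exact mul_pos (mul_pos h2 h3) h1

noncomputable def Bmat (N : ℕ) (p : ℝ) : Matrix (Fin N) (Fin N) ℂ :=
  fun k l => (Real.exp (-p) : ℂ) * Complex.exp ((p : ℂ) * eps N (((l : ℕ) : ℤ) - ((k : ℕ) : ℤ)))

noncomputable def Minv (N : ℕ) (p : ℝ) : Matrix (Fin N) (Fin N) ℂ :=
  fun l k => (N : ℂ)⁻¹ * ∑ j : Fin N, ((lam N p (j : ℕ) : ℝ) : ℂ)⁻¹ *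
    eps N ((((k : ℕ) : ℤ) - ((l : ℕ) : ℤ)) * ((j : ℕ) : ℤ))

lemma shift_sum (N : ℕ) (hN : 0 < N) (a : Fin N) (f : ℤ → ℂ)
    (hf : ∀ x y : ℤ, x % N = y % N → f x = f y) :
    ∑ i : Fin N, f (((i : ℕ) : ℤ) - ((a : ℕ) : ℤ)) = ∑ i : Fin N, f ((i : ℕ) : ℤ) := by
  haveI : NeZero N := ⟨hN.ne'⟩
  refine (Fintype.sum_bijective (fun i : Fin N => i + a) (Equiv.addRight a).bijective
    _ _ fun i => ?_).symm
  have hval : (((i + a : Fin N) : ℕ) : ℤ) % N = (((i : ℕ) : ℤ) + ((a : ℕ) : ℤ)) % N := by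
    rw [Fin.add_def]
    push_cast
    simp [Int.emod_emod_of_dvd]
  exact hf _ _ (by simpa [Int.ModEq] using (Int.ModEq.sub_right ((a : ℕ) : ℤ) hval).symm)

end Stmt13Aux

namespace Stmt13Aux

lemma inner_sum (N : ℕ) (hN : 0 < N) (p : ℝ) (hp : 0 < p) (a : Fin N) (j : ℕ) (hj : j < N) :
    ∑ i : Fin N, Complex.exp ((p : ℂ) * eps N (((i : ℕ) : ℤ) - ((a : ℕ) : ℤ))) *
        eps N (-(((i : ℕ) : ℤ) * j)) =
      eps N (-(((a : ℕ) : ℤ) * j)) * ((N : ℂ) * ((μ N p j : ℝ) : ℂ)) := by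
  set f : ℤ → ℂ := fun x => Complex.exp ((p : ℂ) * eps N x) * eps N (-(x * j)) with hfdef
  have hf : ∀ x y : ℤ, x % N = y % N → f x = f y := by
    intro x y h
    have h1 : eps N x = eps N y := eps_congr N hN h
    have h2 : eps N (-(x * j)) = eps N (-(y * j)) := by
      refine eps_congr N hN ?_
      have : x * j ≡ y * j [ZMOD N] := Int.ModEq.mul_right _ h
      exact this.neg
    simp only [hfdef, h1, h2]
  have key : ∀ i : Fin N,
      Complex.exp ((p : ℂ) * eps N (((i : ℕ) : ℤ) - ((a : ℕ) : ℤ))) * eps N (-(((i : ℕ) : ℤ) * j))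
        = f (((i : ℕ) : ℤ) - ((a : ℕ) : ℤ)) * eps N (-(((a : ℕ) : ℤ) * j)) := by
    intro i
    simp only [hfdef]
    have : eps N (-((((i : ℕ) : ℤ) - ((a : ℕ) : ℤ)) * j)) * eps N (-(((a : ℕ) : ℤ) * j))
        = eps N (-(((i : ℕ) : ℤ) * j)) := by
      rw [← eps_add]
      congr 1
      ring
    rw [mul_assoc, this]
  calc ∑ i : Fin N, Complex.exp ((p : ℂ) * eps N (((i : ℕ) : ℤ) - ((a : ℕ) : ℤ))) *
        eps N (-(((i : ℕ) : ℤ) * j))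
      = ∑ i : Fin N, f (((i : ℕ) : ℤ) - ((a : ℕ) : ℤ)) * eps N (-(((a : ℕ) : ℤ) * j)) :=
        Finset.sum_congr rfl fun i _ => key i
    _ = (∑ i : Fin N, f (((i : ℕ) : ℤ) - ((a : ℕ) : ℤ))) * eps N (-(((a : ℕ) : ℤ) * j)) := by
        rw [Finset.sum_mul]
    _ = (∑ i : Fin N, f ((i : ℕ) : ℤ)) * eps N (-(((a : ℕ) : ℤ) * j)) := by
        rw [shift_sum N hN a f hf]
    _ = eps N (-(((a : ℕ) : ℤ) * j)) * ((N : ℂ) * ((μ N p j : ℝ) : ℂ)) := by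
        rw [eig N hN p hp j hj]
        ring

lemma B_mul_Minv (N : ℕ) (hN : 0 < N) (p : ℝ) (hp : 0 < p) :
    Bmat N p * Minv N p = 1 := by
  ext a b
  rw [Matrix.mul_apply, Matrix.one_apply]
  have hlamne : ∀ j : ℕ, ((lam N p j : ℝ) : ℂ) ≠ 0 := fun j => by
    exact_mod_cast (lam_pos N hN p hp j).ne'
  calc ∑ i : Fin N, Bmat N p a i * Minv N p i b
      = ∑ i : Fin N, ∑ j : Fin N, (Real.exp (-p) : ℂ) * (N : ℂ)⁻¹ *
          (((lam N p (j : ℕ) : ℝ) : ℂ)⁻¹ * eps N (((b : ℕ) : ℤ) * ((j : ℕ) : ℤ))) *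
          (Complex.exp ((p : ℂ) * eps N (((i : ℕ) : ℤ) - ((a : ℕ) : ℤ))) *
            eps N (-(((i : ℕ) : ℤ) * ((j : ℕ) : ℤ)))) := by
        refine Finset.sum_congr rfl fun i _ => ?_
        rw [Bmat, Minv, Finset.mul_sum, Finset.mul_sum]
        refine Finset.sum_congr rfl fun j _ => ?_
        have hsplit : eps N ((((b : ℕ) : ℤ) - ((i : ℕ) : ℤ)) * ((j : ℕ) : ℤ))
            = eps N (((b : ℕ) : ℤ) * ((j : ℕ) : ℤ)) * eps N (-(((i : ℕ) : ℤ) * ((j : ℕ) : ℤ))) := by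
          rw [← eps_add]; congr 1; ring
        rw [hsplit]
        ring
    _ = ∑ j : Fin N, (Real.exp (-p) : ℂ) * (N : ℂ)⁻¹ *
          (((lam N p (j : ℕ) : ℝ) : ℂ)⁻¹ * eps N (((b : ℕ) : ℤ) * ((j : ℕ) : ℤ))) *
          (eps N (-(((a : ℕ) : ℤ) * ((j : ℕ) : ℤ))) * ((N : ℂ) * ((μ N p (j : ℕ) : ℝ) : ℂ))) := by
        rw [Finset.sum_comm]
        refine Finset.sum_congr rfl fun j _ => ?_
        rw [← Finset.mul_sum, inner_sum N hN p hp a (j : ℕ) j.isLt]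
    _ = ∑ j : Fin N, (N : ℂ)⁻¹ * eps N ((((b : ℕ) : ℤ) - ((a : ℕ) : ℤ)) * ((j : ℕ) : ℤ)) := by
        refine Finset.sum_congr rfl fun j _ => ?_
        have hmerge : eps N (((b : ℕ) : ℤ) * ((j : ℕ) : ℤ)) * eps N (-(((a : ℕ) : ℤ) * ((j : ℕ) : ℤ)))
            = eps N ((((b : ℕ) : ℤ) - ((a : ℕ) : ℤ)) * ((j : ℕ) : ℤ)) := by
          rw [← eps_add]; congr 1; ring
        have hlam : ((lam N p (j : ℕ) : ℝ) : ℂ) = (N : ℂ) * (Real.exp (-p) : ℂ) * ((μ N p (j : ℕ) : ℝ) : ℂ) := by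
          rw [lam]; push_cast; ring
        have hA : (Real.exp (-p) : ℂ) * ((N : ℂ) * ((μ N p (j : ℕ) : ℝ) : ℂ)) *
            ((lam N p (j : ℕ) : ℝ) : ℂ)⁻¹ = 1 := by
          have : (Real.exp (-p) : ℂ) * ((N : ℂ) * ((μ N p (j : ℕ) : ℝ) : ℂ))
              = ((lam N p (j : ℕ) : ℝ) : ℂ) := by rw [hlam]; ring
          rw [this, mul_inv_cancel₀ (hlamne (j : ℕ))]
        calc (Real.exp (-p) : ℂ) * (N : ℂ)⁻¹ *
              (((lam N p (j : ℕ) : ℝ) : ℂ)⁻¹ * eps N (((b : ℕ) : ℤ) * ((j : ℕ) : ℤ))) *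
              (eps N (-(((a : ℕ) : ℤ) * ((j : ℕ) : ℤ))) * ((N : ℂ) * ((μ N p (j : ℕ) : ℝ) : ℂ)))
            = ((Real.exp (-p) : ℂ) * ((N : ℂ) * ((μ N p (j : ℕ) : ℝ) : ℂ)) *
                ((lam N p (j : ℕ) : ℝ) : ℂ)⁻¹) * ((N : ℂ)⁻¹ *
                (eps N (((b : ℕ) : ℤ) * ((j : ℕ) : ℤ)) * eps N (-(((a : ℕ) : ℤ) * ((j : ℕ) : ℤ))))) := by
              ring
          _ = (N : ℂ)⁻¹ * (eps N (((b : ℕ) : ℤ) * ((j : ℕ) : ℤ)) * eps N (-(((a : ℕ) : ℤ) * ((j : ℕ) : ℤ)))) := by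
              rw [hA, one_mul]
          _ = (N : ℂ)⁻¹ * eps N ((((b : ℕ) : ℤ) - ((a : ℕ) : ℤ)) * ((j : ℕ) : ℤ)) := by
              rw [← eps_add]
              congr 2
              ring
    _ = (if a = b then 1 else 0) := by
        rw [← Finset.mul_sum]
        have : ∑ j : Fin N, eps N ((((b : ℕ) : ℤ) - ((a : ℕ) : ℤ)) * ((j : ℕ) : ℤ))
            = ∑ j : Fin N, eps N (((j : ℕ) : ℤ) * (((b : ℕ) : ℤ) - ((a : ℕ) : ℤ))) := by
          refine Finset.sum_congr rfl fun j _ => by rw [mul_comm]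
        rw [this, sum_eps N hN]
        by_cases hab : a = b
        · rw [if_pos hab, if_pos (by simp [hab])]
          have hNne : (N : ℂ) ≠ 0 := by exact_mod_cast hN.ne'
          field_simp
        · rw [if_neg ?_, if_neg hab, mul_zero]
          intro hdvd
          apply hab
          have h1 : ((a : ℕ) : ℤ) < N := by exact_mod_cast a.isLt
          have h2 : ((b : ℕ) : ℤ) < N := by exact_mod_cast b.isLt
          obtain ⟨t, ht⟩ := hdvd
          have : (a : ℕ) = (b : ℕ) := by
            rcases lt_trichotomy t 0 with h | h | h
            · nlinarith [Int.ofNat_nonneg (a : ℕ), Int.ofNat_nonneg (b : ℕ),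
                mul_le_mul_of_nonneg_left (show t ≤ -1 by omega) (le_of_lt (show (0:ℤ) < N by exact_mod_cast hN))]
            · subst h
              simp only [mul_zero] at ht
              omega
            · nlinarith [Int.ofNat_nonneg (a : ℕ), Int.ofNat_nonneg (b : ℕ),
                mul_le_mul_of_nonneg_left (show (1:ℤ) ≤ t by omega) (le_of_lt (show (0:ℤ) < N by exact_mod_cast hN))]
          exact Fin.ext this
        
end Stmt13Aux

namespace Stmt13Aux

lemma mu_split (N : ℕ) (hN : 0 < N) (p : ℝ) (hp : 0 < p) (n : ℕ) :
    μ N p n = p ^ n / (Nat.factorial n) *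
      (1 + ∑' u : ℕ, (Nat.factorial n : ℝ) * p ^ ((u + 1) * N) / Nat.factorial (n + (u + 1) * N)) := by
  rw [μ, Summable.tsum_eq_zero_add (summable_mu N hN p n), mul_add, mul_one, ← tsum_mul_left]
  congr 1
  · simp
  · refine tsum_congr fun u => ?_
    have hfacn : (Nat.factorial n : ℝ) ≠ 0 := by positivity
    have hfac2 : (Nat.factorial (n + (u + 1) * N) : ℝ) ≠ 0 := by positivity
    have hadd : n + (u + 1) * N = n + (u + 1) * N := rfl
    rw [show n + (u + 1) * N = n + (u + 1) * N from rfl]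
    have : p ^ (n + (u + 1) * N) = p ^ n * p ^ ((u + 1) * N) := pow_add p n _
    field_simp
    rw [show n + (u + 1) * N = n + (u + 1) * N from rfl, this]

lemma dvd_sub_iff (N : ℕ) (hN : 0 < N) (x y : ℤ) (hx : 0 ≤ x) (hx2 : x < N) (hy : 0 ≤ y)
    (hy2 : y < N) : (N : ℤ) ∣ (x - y) ↔ x = y := by
  constructor
  · rintro ⟨t, ht⟩
    rcases lt_trichotomy t 0 with h | h | h
    · nlinarith [mul_le_mul_of_nonneg_left (show t ≤ -1 by omega)
        (show (0:ℤ) ≤ N by positivity)]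
    · subst h
      simp only [mul_zero] at ht
      omega
    · nlinarith [mul_le_mul_of_nonneg_left (show (1:ℤ) ≤ t by omega)
        (show (0:ℤ) ≤ N by positivity)]
  · rintro rfl
    simp

lemma scalar_id (N : ℕ) (hN : 0 < N) (p : ℝ) (hp : 0 < p) (n : ℕ)
    (ν : ℝ) (hν : ν = ∑' u : ℕ, (Nat.factorial n : ℝ) * p ^ ((u + 1) * N) / Nat.factorial (n + (u + 1) * N)) :
    (Real.exp (-p / 2) * Real.sqrt p ^ n / Real.sqrt (Nat.factorial n)) ^ 2 *
      ((N : ℝ) * (N : ℝ) * (N : ℝ)⁻¹) * (lam N p n)⁻¹ = (1 + ν)⁻¹ := by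
  have hc2 : (Real.exp (-p / 2) * Real.sqrt p ^ n / Real.sqrt (Nat.factorial n)) ^ 2
      = Real.exp (-p) * p ^ n / (Nat.factorial n) := by
    have h1 : Real.exp (-p / 2) ^ 2 = Real.exp (-p) := by
      rw [← Real.exp_nat_mul]
      norm_num
      rw [show (2:ℝ) * (-p / 2) = -p by ring]
    have h2 : (Real.sqrt p ^ n) ^ 2 = p ^ n := by
      rw [← pow_mul, mul_comm n 2, pow_mul, Real.sq_sqrt hp.le]
    have h3 : Real.sqrt (Nat.factorial n) ^ 2 = (Nat.factorial n : ℝ) := by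
      rw [Real.sq_sqrt (by positivity)]
    rw [div_pow, mul_pow, h1, h2, h3]
  have hνnn : 0 ≤ ν := by
    rw [hν]
    refine tsum_nonneg fun u => by positivity
  have h1ν : (0:ℝ) < 1 + ν := by linarith
  have hlam : lam N p n = (N : ℝ) * Real.exp (-p) * (p ^ n / (Nat.factorial n) * (1 + ν)) := by
    rw [lam, mu_split N hN p hp n, hν]
  rw [hc2, hlam]
  have hNpos : (0:ℝ) < N := by exact_mod_cast hN
  have hexp : (0:ℝ) < Real.exp (-p) := Real.exp_pos _
  have hfac : (0:ℝ) < (Nat.factorial n : ℝ) := by positivity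
  have hpn : (0:ℝ) < p ^ n := by positivity
  field_simp

end Stmt13Aux

open Stmt13Aux

theorem stmt13 (N : ℕ) (hN : 0 < N) (p : ℝ) (hp : 0 < p)
    (T : Fin N → ℕ → ℂ)
    (hT : ∀ (k : Fin N) (n : ℕ),
      T k n = ((Real.exp (-p / 2) * Real.sqrt p ^ n / Real.sqrt (Nat.factorial n) : ℝ) : ℂ) *
        Complex.exp (-(2 * Real.pi * Complex.I) * (k : ℂ) * (n : ℂ) / (N : ℂ)))
    (B : Matrix (Fin N) (Fin N) ℂ)
    (hB : ∀ k l : Fin N, B k l = (Real.exp (-p) : ℂ) *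
      Complex.exp ((p : ℂ) * Complex.exp (2 * Real.pi * Complex.I * ((l : ℂ) - (k : ℂ)) / (N : ℂ))))
    (ν : ℕ → ℝ)
    (hν : ∀ n : ℕ, ν n = ∑' u : ℕ,
      (Nat.factorial n : ℝ) * p ^ ((u + 1) * N) / Nat.factorial (n + (u + 1) * N)) :
    ∀ m n : ℕ, m ≤ N - 1 → n ≤ N - 1 →
      (∑ l : Fin N, ∑ k : Fin N, (starRingEnd ℂ) (T l m) * (B⁻¹ l k) * T k n) =
        if n = m then (((1 + ν n : ℝ))⁻¹ : ℂ) else 0 := by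
  intro m n hm hn
  have hm' : m < N := by omega
  have hn' : n < N := by omega
  have hBeq : B = Bmat N p := by
    ext k l
    rw [hB, Bmat]
    congr 2
    rw [eps]
    congr 1
    push_cast
    ring
  have hBinv : B⁻¹ = Minv N p := by
    rw [hBeq]
    exact Matrix.inv_eq_right_inv (B_mul_Minv N hN p hp)
  set cm : ℝ := Real.exp (-p / 2) * Real.sqrt p ^ m / Real.sqrt (Nat.factorial m) with hcm
  set cn : ℝ := Real.exp (-p / 2) * Real.sqrt p ^ n / Real.sqrt (Nat.factorial n) with hcn
  have hTconj : ∀ l : Fin N, (starRingEnd ℂ) (T l m)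
      = (cm : ℂ) * eps N (((l : ℕ) : ℤ) * m) := by
    intro l
    rw [hT, map_mul, Complex.conj_ofReal]
    congr 1
    rw [eps, ← Complex.exp_conj]
    congr 1
    simp only [map_div₀, map_mul, map_neg, Complex.conj_I, Complex.conj_ofReal, map_ofNat,
      Complex.conj_natCast]
    push_cast
    ring
  have hTval : ∀ k : Fin N, T k n = (cn : ℂ) * eps N (-(((k : ℕ) : ℤ) * n)) := by
    intro k
    rw [hT]
    congr 1
    rw [eps]
    congr 1
    push_cast
    ring
  set C : Fin N → ℂ := fun j =>
    (cm : ℂ) * (cn : ℂ) * (N : ℂ)⁻¹ * ((lam N p (j : ℕ) : ℝ) : ℂ)⁻¹ with hC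
  set jm : Fin N := ⟨m, hm'⟩ with hjm
  set jn : Fin N := ⟨n, hn'⟩ with hjn
  have hSL : ∀ j : Fin N,
      (∑ l : Fin N, eps N (((l : ℕ) : ℤ) * ((m : ℤ) - ((j : ℕ) : ℤ)))) =
        if j = jm then (N : ℂ) else 0 := by
    intro j
    rw [sum_eps N hN]
    have hiff : ((N : ℤ) ∣ ((m : ℤ) - ((j : ℕ) : ℤ))) ↔ (j = jm) := by
      rw [dvd_sub_iff N hN _ _ (by positivity) (by exact_mod_cast hm') (by positivity)
        (by exact_mod_cast j.isLt)]
      rw [Fin.ext_iff]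
      constructor
      · intro h; exact_mod_cast h.symm
      · intro h; exact_mod_cast congrArg (fun x : ℕ => (x : ℤ)) h.symm
    simp only [hiff]
  have hSK : ∀ j : Fin N,
      (∑ k : Fin N, eps N (((k : ℕ) : ℤ) * (((j : ℕ) : ℤ) - (n : ℤ)))) =
        if j = jn then (N : ℂ) else 0 := by
    intro j
    rw [sum_eps N hN]
    have hiff : ((N : ℤ) ∣ (((j : ℕ) : ℤ) - (n : ℤ))) ↔ (j = jn) := by
      rw [dvd_sub_iff N hN _ _ (by positivity) (by exact_mod_cast j.isLt) (by positivity)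
        (by exact_mod_cast hn')]
      rw [Fin.ext_iff]
      constructor
      · intro h; exact_mod_cast h
      · intro h; exact_mod_cast congrArg (fun x : ℕ => (x : ℤ)) h
    simp only [hiff]
  calc ∑ l : Fin N, ∑ k : Fin N, (starRingEnd ℂ) (T l m) * (B⁻¹ l k) * T k n
      = ∑ l : Fin N, ∑ k : Fin N, ∑ j : Fin N,
          C j * eps N (((l : ℕ) : ℤ) * ((m : ℤ) - ((j : ℕ) : ℤ))) *
            eps N (((k : ℕ) : ℤ) * (((j : ℕ) : ℤ) - (n : ℤ))) := by
        refine Finset.sum_congr rfl fun l _ => Finset.sum_congr rfl fun k _ => ?_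
        rw [hTconj l, hTval k, hBinv, Minv]
        rw [Finset.mul_sum, Finset.mul_sum, Finset.sum_mul]
        refine Finset.sum_congr rfl fun j _ => ?_
        have hmerge : eps N (((l : ℕ) : ℤ) * m) *
              eps N (((((k : ℕ) : ℤ) - ((l : ℕ) : ℤ))) * ((j : ℕ) : ℤ)) *
              eps N (-(((k : ℕ) : ℤ) * n))
            = eps N (((l : ℕ) : ℤ) * ((m : ℤ) - ((j : ℕ) : ℤ))) *
              eps N (((k : ℕ) : ℤ) * (((j : ℕ) : ℤ) - (n : ℤ))) := by
          rw [← eps_add, ← eps_add, ← eps_add]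
          congr 1
          ring
        calc (cm : ℂ) * eps N (((l : ℕ) : ℤ) * m) *
              ((N : ℂ)⁻¹ * (((lam N p (j : ℕ) : ℝ) : ℂ)⁻¹ *
                eps N (((((k : ℕ) : ℤ) - ((l : ℕ) : ℤ))) * ((j : ℕ) : ℤ)))) *
              ((cn : ℂ) * eps N (-(((k : ℕ) : ℤ) * n)))
            = C j * (eps N (((l : ℕ) : ℤ) * m) *
                eps N (((((k : ℕ) : ℤ) - ((l : ℕ) : ℤ))) * ((j : ℕ) : ℤ)) *
                eps N (-(((k : ℕ) : ℤ) * n))) := by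
              rw [hC]
              ring
          _ = _ := by rw [hmerge]; ring
    _ = ∑ j : Fin N, ∑ l : Fin N, ∑ k : Fin N,
          C j * eps N (((l : ℕ) : ℤ) * ((m : ℤ) - ((j : ℕ) : ℤ))) *
            eps N (((k : ℕ) : ℤ) * (((j : ℕ) : ℤ) - (n : ℤ))) := by
        rw [show (∑ l : Fin N, ∑ k : Fin N, ∑ j : Fin N,
            C j * eps N (((l : ℕ) : ℤ) * ((m : ℤ) - ((j : ℕ) : ℤ))) *
              eps N (((k : ℕ) : ℤ) * (((j : ℕ) : ℤ) - (n : ℤ))))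
          = ∑ l : Fin N, ∑ j : Fin N, ∑ k : Fin N,
            C j * eps N (((l : ℕ) : ℤ) * ((m : ℤ) - ((j : ℕ) : ℤ))) *
              eps N (((k : ℕ) : ℤ) * (((j : ℕ) : ℤ) - (n : ℤ)))
          from Finset.sum_congr rfl fun l _ => Finset.sum_comm]
        exact Finset.sum_comm
    _ = ∑ j : Fin N, C j * (∑ l : Fin N, eps N (((l : ℕ) : ℤ) * ((m : ℤ) - ((j : ℕ) : ℤ)))) *
          (∑ k : Fin N, eps N (((k : ℕ) : ℤ) * (((j : ℕ) : ℤ) - (n : ℤ)))) := by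
        refine Finset.sum_congr rfl fun j _ => ?_
        calc ∑ l : Fin N, ∑ k : Fin N,
              C j * eps N (((l : ℕ) : ℤ) * ((m : ℤ) - ((j : ℕ) : ℤ))) *
                eps N (((k : ℕ) : ℤ) * (((j : ℕ) : ℤ) - (n : ℤ)))
            = ∑ l : Fin N, (C j * eps N (((l : ℕ) : ℤ) * ((m : ℤ) - ((j : ℕ) : ℤ)))) *
                (∑ k : Fin N, eps N (((k : ℕ) : ℤ) * (((j : ℕ) : ℤ) - (n : ℤ)))) :=
              Finset.sum_congr rfl fun l _ => (Finset.mul_sum _ _ _).symm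
          _ = (∑ l : Fin N, C j * eps N (((l : ℕ) : ℤ) * ((m : ℤ) - ((j : ℕ) : ℤ)))) *
                (∑ k : Fin N, eps N (((k : ℕ) : ℤ) * (((j : ℕ) : ℤ) - (n : ℤ)))) :=
              (Finset.sum_mul _ _ _).symm
          _ = C j * (∑ l : Fin N, eps N (((l : ℕ) : ℤ) * ((m : ℤ) - ((j : ℕ) : ℤ)))) *
                (∑ k : Fin N, eps N (((k : ℕ) : ℤ) * (((j : ℕ) : ℤ) - (n : ℤ)))) := by
              rw [← Finset.mul_sum]
    _ = if jm = jn then C jm * (N : ℂ) * (N : ℂ) else 0 := by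
        simp only [hSL, hSK]
        rw [Finset.sum_eq_single jm]
        · rw [if_pos rfl]
          split_ifs with h
          · rfl
          · rw [mul_zero]
        · intro j _ hj
          rw [if_neg hj, mul_zero, zero_mul]
        · intro habs
          exact absurd (Finset.mem_univ jm) habs
    _ = if n = m then (((1 + ν n : ℝ))⁻¹ : ℂ) else 0 := by
        by_cases h : n = m
        · subst h
          rw [if_pos rfl, if_pos rfl]
          have hs := scalar_id N hN p hp n (ν n) (hν n)
          have hjval : ((jm : ℕ) : ℕ) = n := rfl
          have hcast : C jm * (N : ℂ) * (N : ℂ)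
              = (((Real.exp (-p / 2) * Real.sqrt p ^ n / Real.sqrt (Nat.factorial n)) ^ 2 *
                  ((N : ℝ) * (N : ℝ) * (N : ℝ)⁻¹) * (lam N p n)⁻¹ : ℝ) : ℂ) := by
            simp only [hC]
            rw [hcm, hcn]
            push_cast
            ring
          rw [hcast, hs]
          push_cast
          ring
        · rw [if_neg ?_, if_neg h]
          intro he
          apply h
          have hmn : m = n := by
            have h2 := congrArg (fun x : Fin N => (x : ℕ)) he
            simpa [hjm, hjn] using h2
          omega
end

section
/- For any ψ ∈ ℓ² with ‖ψ‖ = 1, writing ψ = ψ_{N-1} + ψ_{N-1}^⊥ (projections onto the first N Fock states and their complement, with ‖ψ_{N-1}^⊥‖ = ε), the error ‖ψ - P_S ψ‖² satisfies ‖ψ - P_S ψ‖² ≤ ν_0(p,N)/(1+ν_0(p,N)) + 2ε√(1-ε²) + ε²(2+ν_0(p,N))/(1+ν_0(p,N)), where P_S is the orthogonal projector onto the span of coherent states |z_k⟩ at z_k = √p e^{2πik/N}, and ν_0(p,N) = ∑_{u≥1} p^{uN}/(uN)!. -/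
set_option maxHeartbeats 1000000

open Complex

lemma rootsum (N : ℕ) (hN : 0 < N) (m : ℤ) :
    ∑ k ∈ Finset.range N, Complex.exp (2 * Real.pi * I * m * k / N) =
      if (N : ℤ) ∣ m then (N : ℂ) else 0 := by
  have hNC : (N:ℂ) ≠ 0 := Nat.cast_ne_zero.2 hN.ne'
  have hz : ∀ k : ℕ, Complex.exp (2 * Real.pi * I * m * k / N)
      = Complex.exp (2 * Real.pi * I * m / N) ^ k := by
    intro k
    rw [← Complex.exp_nat_mul]; ring_nf
  simp_rw [hz]
  set ζ := Complex.exp (2 * Real.pi * I * m / N) with hζ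
  by_cases h : (N : ℤ) ∣ m
  · obtain ⟨c, rfl⟩ := h
    have : ζ = 1 := by
      rw [hζ, Complex.exp_eq_one_iff]
      refine ⟨c, ?_⟩
      push_cast; field_simp
    rw [if_pos ⟨c, rfl⟩]
    simp [this]
  · have hζ1 : ζ ≠ 1 := by
      rw [hζ, Ne, Complex.exp_eq_one_iff]
      rintro ⟨n, hn⟩
      apply h
      have h2 : (2:ℂ) * Real.pi * I ≠ 0 := by
        simp [Real.pi_ne_zero, Complex.I_ne_zero]
      refine ⟨n, ?_⟩
      field_simp at hn
      have hmn : (m : ℂ) = n * N := by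
        rcases mul_eq_mul_right_iff.1 (by linear_combination (2 * Real.pi * I) * hn :
            (m : ℂ) * (2 * Real.pi * I) = (n * N) * (2 * Real.pi * I)) with h' | h'
        · exact h'
        · exact absurd h' h2
      have : m = n * (N:ℤ) := by exact_mod_cast hmn
      rw [this]; ring
    have hζN : ζ ^ N = 1 := by
      rw [hζ, ← Complex.exp_nat_mul, Complex.exp_eq_one_iff]
      refine ⟨m, ?_⟩
      field_simp
    rw [if_neg h, geom_sum_eq hζ1, hζN]
    simp

lemma parsevalSq {H : Type*} [NormedAddCommGroup H] [InnerProductSpace ℂ H] [CompleteSpace H]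
    (hb : HilbertBasis ℕ ℂ H) (x : H) :
    HasSum (fun n => Complex.normSq (inner ℂ (hb n) x : ℂ)) (‖x‖ ^ 2) := by
  have h1 := hb.hasSum_inner_mul_inner x x
  have h2 : (fun n => (inner ℂ x (hb n) : ℂ) * inner ℂ (hb n) x)
      = fun n => ((Complex.normSq (inner ℂ (hb n) x : ℂ) : ℝ) : ℂ) := by
    funext n
    have hc : (inner ℂ x (hb n) : ℂ) = (starRingEnd ℂ) (inner ℂ (hb n) x) :=
      (inner_conj_symm x (hb n)).symm
    rw [hc, ← Complex.normSq_eq_conj_mul_self]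
  rw [h2] at h1
  have h3 := h1.mapL Complex.reCLM
  have h4 : ((inner ℂ x x : ℂ)).re = ‖x‖ ^ 2 := inner_self_eq_norm_sq (𝕜 := ℂ) x
  simp only [Complex.reCLM_apply, Complex.ofReal_re] at h3
  rwa [h4] at h3

lemma hasSumCoeff {H : Type*} [NormedAddCommGroup H] [InnerProductSpace ℂ H] [CompleteSpace H]
    (hb : HilbertBasis ℕ ℂ H) (f : ℕ → ℂ) (hf : Summable fun n => ‖f n‖ ^ 2)
    (x : H) (hx : x = ∑' n, f n • hb n) (n : ℕ) :
    (inner ℂ (hb n) x : ℂ) = f n := by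
  have hmem : Memℓp f 2 := memℓp_gen (by simpa using hf)
  have hs : HasSum (fun m => f m • hb m) (hb.repr.symm ⟨f, hmem⟩) := by
    simpa using hb.hasSum_repr_symm ⟨f, hmem⟩
  have hxs : HasSum (fun m => f m • hb m) x := by
    rw [hx, hs.tsum_eq]; exact hs
  have h2 := hxs.mapL (innerSL ℂ (hb n))
  have h3 : (fun m => (innerSL ℂ (hb n)) (f m • hb m)) = fun m => if m = n then f n else 0 := by
    funext m
    simp only [innerSL_apply_apply, inner_smul_right]
    rw [orthonormal_iff_ite.1 hb.orthonormal]
    by_cases h : m = n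
    · simp [h]
    · simp [h, if_neg (Ne.symm h)]
  rw [h3] at h2
  exact ((hasSum_ite_eq n (f n)).unique h2).symm

theorem stmt18 {H : Type*} [NormedAddCommGroup H] [InnerProductSpace ℂ H] [CompleteSpace H]
    (hb : HilbertBasis ℕ ℂ H)
    (N : ℕ) (hN : 0 < N) (p : ℝ) (hp : 0 < p)
    (cs : Fin N → H)
    (hcs : ∀ k : Fin N, cs k = ∑' n : ℕ,
      (((Real.exp (-p / 2) * Real.sqrt p ^ n / Real.sqrt (Nat.factorial n) : ℝ) : ℂ) *
        Complex.exp (2 * Real.pi * Complex.I * (k : ℂ) * (n : ℂ) / (N : ℂ))) • hb n)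
    (P : H →L[ℂ] H)
    (hPmem : ∀ v : H, P v ∈ Submodule.span ℂ (Set.range cs))
    (hPorth : ∀ v : H, v - P v ∈ (Submodule.span ℂ (Set.range cs))ᗮ)
    (ψ : H) (hψ : ‖ψ‖ = 1)
    (ε : ℝ) (hε : ε = ‖ψ - ∑ n ∈ Finset.range N, (inner ℂ (hb n) ψ : ℂ) • hb n‖)
    (ν₀ : ℝ) (hν₀ : ν₀ = ∑' u : ℕ, p ^ ((u + 1) * N) / Nat.factorial ((u + 1) * N)) :
    ‖ψ - P ψ‖ ^ 2 ≤ ν₀ / (1 + ν₀) + 2 * ε * Real.sqrt (1 - ε ^ 2) +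
      ε ^ 2 * (2 + ν₀) / (1 + ν₀) := by
  haveI : NeZero N := ⟨hN.ne'⟩
  -- the coefficient sequence
  set a : ℕ → ℝ := fun n => Real.exp (-p / 2) * Real.sqrt p ^ n / Real.sqrt (Nat.factorial n)
    with ha_def
  have ha_pos : ∀ n, 0 < a n := by
    intro n
    have h1 : 0 < Real.sqrt p := Real.sqrt_pos.2 hp
    have h2 : (0:ℝ) < Real.sqrt (Nat.factorial n) :=
      Real.sqrt_pos.2 (by exact_mod_cast Nat.factorial_pos n)
    positivity
  have ha_sq : ∀ n, a n ^ 2 = Real.exp (-p) * p ^ n / (Nat.factorial n : ℝ) := by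
    intro n
    have e1 : (Real.exp (-p/2))^2 = Real.exp (-p) := by
      rw [sq, ← Real.exp_add]; norm_num
    have e2 : (Real.sqrt p ^ n)^2 = p ^ n := by
      rw [← pow_mul, mul_comm, pow_mul, Real.sq_sqrt hp.le]
    have e3 : (Real.sqrt (Nat.factorial n))^2 = (Nat.factorial n : ℝ) :=
      Real.sq_sqrt (Nat.cast_nonneg _)
    simp only [ha_def]
    rw [div_pow, mul_pow, e1, e2, e3]
  have hsum_a : Summable fun n => a n ^ 2 := by
    have : (fun n => a n ^ 2) = fun n => Real.exp (-p) * (p ^ n / (Nat.factorial n : ℝ)) := by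
      funext n; rw [ha_sq]; ring
    rw [this]
    exact (Real.summable_pow_div_factorial p).mul_left _
  -- inner products with the coherent states
  have hcoef : ∀ (k : Fin N) (n : ℕ), (inner ℂ (hb n) (cs k) : ℂ)
      = ((a n : ℝ) : ℂ) * Complex.exp (2 * Real.pi * Complex.I * (k : ℂ) * (n : ℂ) / (N : ℂ)) := by
    intro k n
    refine hasSumCoeff hb
      (fun n => ((a n : ℝ) : ℂ) *
        Complex.exp (2 * Real.pi * Complex.I * (k : ℂ) * (n : ℂ) / (N : ℂ))) ?_ (cs k) (hcs k) n
    have hnorm : ∀ m : ℕ, ‖((a m : ℝ) : ℂ) *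
        Complex.exp (2 * Real.pi * Complex.I * (k : ℂ) * (m : ℂ) / (N : ℂ))‖ ^ 2 = a m ^ 2 := by
      intro m
      have harg : 2 * (Real.pi : ℂ) * Complex.I * (k : ℂ) * (m : ℂ) / (N : ℂ)
          = ((2 * Real.pi * k * m / N : ℝ) : ℂ) * Complex.I := by
        push_cast; ring
      rw [norm_mul, harg]
      rw [Complex.norm_exp_ofReal_mul_I]
      rw [Complex.norm_of_nonneg (ha_pos m).le]
      ring
    simpa only [hnorm] using hsum_a
  -- the DFT vectors
  set v : Fin N → H := fun j => ((N : ℂ))⁻¹ • ∑ k : Fin N,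
    Complex.exp (-(2 * Real.pi * Complex.I * (j : ℂ) * (k : ℂ) / (N : ℂ))) • cs k with hv_def
  have hv_mem : ∀ j, v j ∈ Submodule.span ℂ (Set.range cs) := by
    intro j
    apply Submodule.smul_mem
    apply Submodule.sum_mem
    intro k _
    exact Submodule.smul_mem _ _ (Submodule.subset_span ⟨k, rfl⟩)
  have hdvd_iff : ∀ (j : Fin N) (n : ℕ), ((N:ℤ) ∣ ((n:ℤ) - (j:ℕ))) ↔ n % N = (j:ℕ) := by
    intro j n
    have hj : ((j:ℕ):ℤ) % (N:ℤ) = ((j:ℕ):ℤ) :=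
      Int.emod_eq_of_lt (by positivity) (by exact_mod_cast j.isLt)
    rw [← Int.modEq_iff_dvd]
    rw [Int.ModEq]
    rw [hj]
    have hcast : ((n:ℤ)) % (N:ℤ) = ((n % N : ℕ) : ℤ) := by push_cast; ring
    rw [hcast]
    exact ⟨fun h => by exact_mod_cast h.symm, fun h => by exact_mod_cast h.symm⟩
  have hv_inner : ∀ (j : Fin N) (n : ℕ),
      (inner ℂ (hb n) (v j) : ℂ) = if n % N = (j:ℕ) then ((a n : ℝ) : ℂ) else 0 := by
    intro j n
    rw [hv_def]
    simp only [inner_smul_right, inner_sum]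
    have hterm : ∀ k : Fin N,
        Complex.exp (-(2 * Real.pi * Complex.I * (j : ℂ) * (k : ℂ) / (N : ℂ))) *
          (inner ℂ (hb n) (cs k) : ℂ)
        = ((a n : ℝ) : ℂ) *
            Complex.exp (2 * Real.pi * Complex.I * (((n:ℤ) - (j:ℕ) : ℤ) : ℂ) * (k:ℂ) / (N : ℂ)) := by
      intro k
      rw [hcoef k n, ← mul_assoc, mul_comm _ (((a n : ℝ) : ℂ)), mul_assoc, ← Complex.exp_add]
      congr 2
      push_cast
      ring
    rw [Finset.sum_congr rfl (fun k _ => hterm k), ← Finset.mul_sum]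
    have hsum : ∑ k : Fin N, Complex.exp
        (2 * Real.pi * Complex.I * (((n:ℤ) - (j:ℕ) : ℤ) : ℂ) * (k:ℂ) / (N : ℂ))
        = if (N:ℤ) ∣ ((n:ℤ) - (j:ℕ)) then (N : ℂ) else 0 := by
      rw [← rootsum N hN ((n:ℤ) - (j:ℕ))]
      exact Fin.sum_univ_eq_sum_range
        (fun k => Complex.exp (2 * Real.pi * Complex.I * (((n:ℤ) - (j:ℕ) : ℤ) : ℂ) * (k:ℂ) / (N : ℂ))) N
    rw [hsum]
    simp only [hdvd_iff]
    have hNC : (N:ℂ) ≠ 0 := Nat.cast_ne_zero.2 hN.ne'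
    by_cases h : n % N = (j:ℕ)
    · rw [if_pos h, if_pos h]
      field_simp
    · rw [if_neg h, if_neg h]
      ring
  -- tail sums over residue classes
  set S : ℕ → ℝ := fun j => ∑' u : ℕ, a (u * N + j) ^ 2 with hS_def
  have hinj : ∀ j : ℕ, Function.Injective (fun u : ℕ => u * N + j) := by
    intro j u₁ u₂ h
    simp only at h
    have h2 : u₁ * N = u₂ * N := by omega
    exact Nat.eq_of_mul_eq_mul_right hN h2
  have hS_sum : ∀ j : ℕ, Summable fun u : ℕ => a (u * N + j) ^ 2 := fun j =>
    hsum_a.comp_injective (hinj j)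
  have hS_pos : ∀ j : ℕ, 0 < S j := by
    intro j
    have h0 : a (0 * N + j) ^ 2 ≤ S j :=
      Summable.le_tsum (hS_sum j) 0 (fun u _ => sq_nonneg _)
    simp only [zero_mul, zero_add] at h0
    exact lt_of_lt_of_le (by positivity) h0
  have haS : ∀ j : ℕ, a j ^ 2 ≤ S j := by
    intro j
    have h0 : a (0 * N + j) ^ 2 ≤ S j :=
      Summable.le_tsum (hS_sum j) 0 (fun u _ => sq_nonneg _)
    simpa using h0
  have hν₀_sum : Summable fun u : ℕ => p ^ ((u + 1) * N) / (Nat.factorial ((u + 1) * N) : ℝ) := by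
    have hinj2 : Function.Injective (fun u : ℕ => (u + 1) * N) := by
      intro u₁ u₂ h
      simp only at h
      have := Nat.eq_of_mul_eq_mul_right hN h
      omega
    exact (Real.summable_pow_div_factorial p).comp_injective hinj2
  have hν₀_nonneg : 0 ≤ ν₀ := by
    rw [hν₀]
    exact tsum_nonneg (fun u => by positivity)
  have hS_le : ∀ j : ℕ, j < N → S j ≤ a j ^ 2 * (1 + ν₀) := by
    intro j hj
    have hshift : Summable fun u : ℕ => a ((u + 1) * N + j) ^ 2 := by
      have := (hS_sum j).comp_injective (add_left_injective 1)
      exact this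
    have hsplit : S j = a j ^ 2 + ∑' u : ℕ, a ((u + 1) * N + j) ^ 2 := by
      rw [hS_def]
      simp only
      rw [Summable.tsum_eq_zero_add (hS_sum j)]
      simp [add_comm]
    have hterm : ∀ u : ℕ, a ((u + 1) * N + j) ^ 2
        ≤ a j ^ 2 * (p ^ ((u + 1) * N) / (Nat.factorial ((u + 1) * N) : ℝ)) := by
      intro u
      set m := (u + 1) * N with hm
      have hfact : ((Nat.factorial j : ℝ) * Nat.factorial m) ≤ (Nat.factorial (m + j) : ℝ) := by
        have hd : Nat.factorial j * Nat.factorial m ∣ Nat.factorial (j + m) :=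
          Nat.factorial_mul_factorial_dvd_factorial_add j m
        have hle : Nat.factorial j * Nat.factorial m ≤ Nat.factorial (j + m) :=
          Nat.le_of_dvd (Nat.factorial_pos _) hd
        rw [add_comm m j]
        exact_mod_cast hle
      rw [ha_sq, ha_sq]
      have hmj : (0:ℝ) < Nat.factorial (m + j) := by exact_mod_cast Nat.factorial_pos _
      have hjf : (0:ℝ) < Nat.factorial j := by exact_mod_cast Nat.factorial_pos _
      have hmf : (0:ℝ) < Nat.factorial m := by exact_mod_cast Nat.factorial_pos _
      have hrhs : Real.exp (-p) * p ^ j / (Nat.factorial j : ℝ) *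
          (p ^ m / (Nat.factorial m : ℝ))
          = Real.exp (-p) * p ^ (m + j) / ((Nat.factorial j : ℝ) * Nat.factorial m) := by
        rw [pow_add]
        field_simp
      rw [hrhs]
      apply div_le_div_of_nonneg_left (by positivity) (by positivity) hfact
    calc S j = a j ^ 2 + ∑' u : ℕ, a ((u + 1) * N + j) ^ 2 := hsplit
      _ ≤ a j ^ 2 + ∑' u : ℕ, a j ^ 2 * (p ^ ((u + 1) * N) / (Nat.factorial ((u + 1) * N) : ℝ)) := by
          exact add_le_add (le_refl _) (Summable.tsum_le_tsum hterm hshift (hν₀_sum.mul_left _))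
      _ = a j ^ 2 + a j ^ 2 * ν₀ := by
          rw [Summable.tsum_mul_left _ hν₀_sum, hν₀]
      _ = a j ^ 2 * (1 + ν₀) := by ring
  have hA : (0:ℝ) < 1 + ν₀ := by linarith
  have h1mt : ∀ j : ℕ, j < N → 1 - a j ^ 2 / S j ≤ ν₀ / (1 + ν₀) := by
    intro j hj
    have h1 : 1 - a j ^ 2 / S j = (S j - a j ^ 2) / S j := by
      rw [sub_div, div_self (hS_pos j).ne']
    rw [h1, div_le_div_iff₀ (hS_pos j) hA]
    nlinarith [hS_le j hj, hS_pos j, sq_nonneg (a j), ha_pos j]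
  -- the truncated state and the trial vector
  set φ : H := ∑ n ∈ Finset.range N, (inner ℂ (hb n) ψ : ℂ) • hb n with hφ_def
  have hεφ : ε = ‖ψ - φ‖ := hε
  set c : ℕ → ℂ := fun n => (inner ℂ (hb n) ψ : ℂ) with hc_def
  set w : H := ∑ j : Fin N, (c (j:ℕ) * ((a (j:ℕ) / S (j:ℕ) : ℝ) : ℂ)) • v j with hw_def
  have hw_mem : w ∈ Submodule.span ℂ (Set.range cs) := by
    apply Submodule.sum_mem
    intro j _
    exact Submodule.smul_mem _ _ (hv_mem j)
  have hφ_inner : ∀ n : ℕ, (inner ℂ (hb n) φ : ℂ) = if n < N then c n else 0 := by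
    intro n
    rw [hφ_def]
    rw [inner_sum]
    have hterm : ∀ m ∈ Finset.range N, (inner ℂ (hb n) ((inner ℂ (hb m) ψ : ℂ) • hb m) : ℂ)
        = if n = m then c m else 0 := by
      intro m _
      rw [inner_smul_right, orthonormal_iff_ite.1 hb.orthonormal]
      by_cases h : n = m
      · simp [h, hc_def]
      · simp [h]
    rw [Finset.sum_congr rfl hterm, Finset.sum_ite_eq (Finset.range N) n c]
    simp [Finset.mem_range]
  have hw_inner : ∀ n : ℕ, (inner ℂ (hb n) w : ℂ)
      = c (n % N) * ((a (n % N) / S (n % N) : ℝ) : ℂ) * ((a n : ℝ) : ℂ) := by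
    intro n
    rw [hw_def, inner_sum]
    have hj0 : n % N < N := Nat.mod_lt n hN
    set j₀ : Fin N := ⟨n % N, hj0⟩ with hj₀_def
    have hterm : ∀ j ∈ (Finset.univ : Finset (Fin N)),
        (inner ℂ (hb n) ((c (j:ℕ) * ((a (j:ℕ) / S (j:ℕ) : ℝ) : ℂ)) • v j) : ℂ)
        = if j = j₀ then c ((j₀:ℕ)) * ((a ((j₀:ℕ)) / S ((j₀:ℕ)) : ℝ) : ℂ) * ((a n : ℝ) : ℂ)
          else 0 := by
      intro j _
      rw [inner_smul_right, hv_inner j n]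
      by_cases h : j = j₀
      · have : n % N = (j:ℕ) := by rw [h]
        rw [if_pos this, if_pos h, h]
      · have : ¬ (n % N = (j:ℕ)) := by
          intro hcon
          apply h
          apply Fin.ext
          rw [← hcon]
        rw [if_neg this, if_neg h, mul_zero]
    rw [Finset.sum_congr rfl hterm, Finset.sum_ite_eq' Finset.univ j₀ _]
    simp [hj₀_def]
  -- Parseval bookkeeping
  set Sig : ℝ := ∑ n ∈ Finset.range N, Complex.normSq (c n) with hSig_def
  have hSig_nonneg : 0 ≤ Sig := Finset.sum_nonneg (fun n _ => Complex.normSq_nonneg _)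
  have hψsum : HasSum (fun n => Complex.normSq (c n)) 1 := by
    have h := parsevalSq hb ψ
    rw [hψ] at h
    simpa [hc_def] using h
  have hφcoefsum : HasSum (fun n => if n < N then Complex.normSq (c n) else 0) (‖φ‖ ^ 2) := by
    have h := parsevalSq hb φ
    have heq : (fun n => Complex.normSq ((inner ℂ (hb n) φ : ℂ)))
        = fun n => if n < N then Complex.normSq (c n) else 0 := by
      funext n
      rw [hφ_inner n]
      by_cases hlt : n < N <;> simp [hlt]
    rwa [heq] at h
  have hχcoefsum : HasSum (fun n => if n < N then 0 else Complex.normSq (c n)) (ε ^ 2) := by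
    have h := parsevalSq hb (ψ - φ)
    have heq : (fun n => Complex.normSq ((inner ℂ (hb n) (ψ - φ) : ℂ)))
        = fun n => if n < N then 0 else Complex.normSq (c n) := by
      funext n
      rw [inner_sub_right, hφ_inner n]
      by_cases hlt : n < N <;> simp [hlt, hc_def]
    rw [heq] at h
    rwa [hεφ]
  have hφnorm : ‖φ‖ ^ 2 = Sig := by
    have h2 : HasSum (fun n => if n < N then Complex.normSq (c n) else 0) Sig := by
      have : ∀ n ∉ Finset.range N, (if n < N then Complex.normSq (c n) else 0) = 0 := by
        intro n hn
        rw [Finset.mem_range] at hn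
        simp [hn]
      have h3 := hasSum_sum_of_ne_finset_zero (L := SummationFilter.unconditional ℕ) this
      convert h3 using 1
      rw [hSig_def]
      apply Finset.sum_congr rfl
      intro n hn
      rw [Finset.mem_range] at hn
      simp [hn]
    exact hφcoefsum.unique h2
  have hSigeps : Sig + ε ^ 2 = 1 := by
    have hadd := hφcoefsum.add hχcoefsum
    rw [hφnorm] at hadd
    have heq : (fun n => (if n < N then Complex.normSq (c n) else 0)
        + (if n < N then 0 else Complex.normSq (c n))) = fun n => Complex.normSq (c n) := by
      funext n
      by_cases hlt : n < N <;> simp [hlt]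
    rw [heq] at hadd
    exact hadd.unique hψsum
  have hε_nonneg : 0 ≤ ε := by rw [hεφ]; exact norm_nonneg _
  have hε2_le : ε ^ 2 ≤ 1 := by linarith
  -- the key estimate on ‖φ - w‖²
  set G : ℕ → ℝ := fun n => Complex.normSq ((inner ℂ (hb n) (φ - w) : ℂ)) with hG_def
  have hG : HasSum G (‖φ - w‖ ^ 2) := parsevalSq hb (φ - w)
  have hGsum : Summable G := hG.summable
  set e : Fin N × ℕ ≃ ℕ := ((Nat.divModEquiv N).trans (Equiv.prodComm _ _)).symm with he_def
  have he : ∀ q : Fin N × ℕ, e q = q.2 * N + (q.1 : ℕ) := by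
    intro q
    simp [he_def, Nat.divModEquiv]
  have hfe : (fun q : Fin N × ℕ => G (e q)) = fun q : Fin N × ℕ => G (q.2 * N + (q.1 : ℕ)) := by
    funext q
    rw [he]
  have ht1 : ∑' n, G n = ∑' q : Fin N × ℕ, G (q.2 * N + (q.1 : ℕ)) := by
    rw [← hfe, e.tsum_eq G]
  have hGe : Summable fun q : Fin N × ℕ => G (q.2 * N + (q.1 : ℕ)) := by
    rw [← hfe]
    exact hGsum.comp_injective e.injective
  have hslice : ∀ j : Fin N, Summable fun u : ℕ => G (u * N + (j:ℕ)) := fun j =>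
    hGsum.comp_injective (hinj (j:ℕ))
  have ht2 : ∑' q : Fin N × ℕ, G (q.2 * N + (q.1 : ℕ))
      = ∑ j : Fin N, ∑' u : ℕ, G (u * N + (j:ℕ)) := by
    rw [Summable.tsum_prod' hGe (fun j => hslice j), tsum_fintype]
  have hper : ∀ j : Fin N, ∑' u : ℕ, G (u * N + (j:ℕ))
      = Complex.normSq (c (j:ℕ)) * (1 - a (j:ℕ) ^ 2 / S (j:ℕ)) := by
    intro j
    set jn := (j : ℕ) with hjn_def
    have hjlt : jn < N := j.isLt
    have hmod : ∀ u : ℕ, (u * N + jn) % N = jn := by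
      intro u
      rw [add_comm, Nat.add_mul_mod_self_right]
      exact Nat.mod_eq_of_lt hjlt
    have hG0 : G jn = Complex.normSq (c jn) * (1 - a jn ^ 2 / S jn) ^ 2 := by
      have hin : (inner ℂ (hb jn) (φ - w) : ℂ) = c jn * (((1 - a jn ^ 2 / S jn : ℝ)) : ℂ) := by
        rw [inner_sub_right, hφ_inner, hw_inner, if_pos hjlt, Nat.mod_eq_of_lt hjlt]
        push_cast
        ring
      rw [hG_def]
      simp only
      rw [hin, Complex.normSq_mul, Complex.normSq_ofReal]
      ring
    have hGu : ∀ u : ℕ, G ((u + 1) * N + jn)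
        = Complex.normSq (c jn) * ((a jn / S jn) ^ 2 * a ((u + 1) * N + jn) ^ 2) := by
      intro u
      have hge : ¬ ((u + 1) * N + jn < N) := by
        rw [add_mul, one_mul]
        omega
      have hin : (inner ℂ (hb ((u + 1) * N + jn)) (φ - w) : ℂ)
          = - (c jn * ((a jn / S jn : ℝ) : ℂ) * ((a ((u + 1) * N + jn) : ℝ) : ℂ)) := by
        rw [inner_sub_right, hφ_inner, hw_inner, if_neg hge, hmod (u + 1)]
        ring
      rw [hG_def]
      simp only
      rw [hin, Complex.normSq_neg, Complex.normSq_mul, Complex.normSq_mul,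
        Complex.normSq_ofReal, Complex.normSq_ofReal]
      ring
    have hshift : Summable fun u : ℕ => a ((u + 1) * N + jn) ^ 2 := by
      have h := (hS_sum jn).comp_injective (add_left_injective 1)
      exact h
    have htail : ∑' u : ℕ, a ((u + 1) * N + jn) ^ 2 = S jn - a jn ^ 2 := by
      have h := Summable.tsum_eq_zero_add (hS_sum jn)
      have h2 : S jn = a jn ^ 2 + ∑' u : ℕ, a ((u + 1) * N + jn) ^ 2 := by
        rw [hS_def]
        simp only
        rw [h]
        norm_num
      linarith
    rw [Summable.tsum_eq_zero_add (hslice j)]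
    have h0 : G (0 * N + jn) = G jn := by norm_num
    rw [h0, hG0, tsum_congr hGu]
    have hmul : ∑' u : ℕ, Complex.normSq (c jn) * ((a jn / S jn) ^ 2 * a ((u + 1) * N + jn) ^ 2)
        = Complex.normSq (c jn) * ((a jn / S jn) ^ 2 * (S jn - a jn ^ 2)) := by
      rw [← htail]
      rw [← Summable.tsum_mul_left ((a jn / S jn) ^ 2) hshift]
      rw [← Summable.tsum_mul_left (Complex.normSq (c jn)) (hshift.mul_left _)]
    rw [hmul]
    have hSpos := hS_pos jn
    have hid : (1 - a jn ^ 2 / S jn) ^ 2 + (a jn / S jn) ^ 2 * (S jn - a jn ^ 2)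
        = 1 - a jn ^ 2 / S jn := by
      field_simp
      ring
    nlinarith [hid, Complex.normSq_nonneg (c jn)]
  have hφw_sq : ‖φ - w‖ ^ 2 ≤ ν₀ / (1 + ν₀) * Sig := by
    rw [← hG.tsum_eq, ht1, ht2]
    have hbound : ∀ j ∈ (Finset.univ : Finset (Fin N)), ∑' u : ℕ, G (u * N + (j:ℕ))
        ≤ Complex.normSq (c (j:ℕ)) * (ν₀ / (1 + ν₀)) := by
      intro j _
      rw [hper j]
      exact mul_le_mul_of_nonneg_left (h1mt (j:ℕ) j.isLt) (Complex.normSq_nonneg _)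
    calc ∑ j : Fin N, ∑' u : ℕ, G (u * N + (j:ℕ))
        ≤ ∑ j : Fin N, Complex.normSq (c (j:ℕ)) * (ν₀ / (1 + ν₀)) :=
          Finset.sum_le_sum hbound
      _ = ν₀ / (1 + ν₀) * Sig := by
          rw [hSig_def, ← Fin.sum_univ_eq_sum_range (fun n => Complex.normSq (c n)) N,
            Finset.mul_sum]
          apply Finset.sum_congr rfl
          intro j _
          ring
  -- Pythagoras: the projection is the closest point
  have hPyth : ‖ψ - P ψ‖ ^ 2 ≤ ‖ψ - w‖ ^ 2 := by
    have hx : ψ - P ψ ∈ (Submodule.span ℂ (Set.range cs))ᗮ := hPorth ψ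
    have hy : P ψ - w ∈ Submodule.span ℂ (Set.range cs) :=
      Submodule.sub_mem _ (hPmem ψ) hw_mem
    have hinner0 : (inner ℂ (ψ - P ψ) (P ψ - w) : ℂ) = 0 := by
      rw [inner_eq_zero_symm]
      exact (Submodule.mem_orthogonal _ _).1 hx _ hy
    have hsum := norm_add_sq_eq_norm_sq_add_norm_sq_of_inner_eq_zero _ _ hinner0
    rw [sub_add_sub_cancel] at hsum
    rw [pow_two, pow_two]
    nlinarith [hsum, mul_self_nonneg ‖P ψ - w‖]
  have htri : ‖ψ - w‖ ≤ ε + ‖φ - w‖ := by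
    rw [hεφ]
    calc ‖ψ - w‖ = ‖(ψ - φ) + (φ - w)‖ := by rw [sub_add_sub_cancel]
      _ ≤ ‖ψ - φ‖ + ‖φ - w‖ := norm_add_le _ _
  have hκ_le : ν₀ / (1 + ν₀) ≤ 1 := by
    rw [div_le_one hA]; linarith
  have hκ_nonneg : 0 ≤ ν₀ / (1 + ν₀) := by positivity
  have hSigle : Sig = 1 - ε ^ 2 := by linarith
  have h1me : 0 ≤ 1 - ε ^ 2 := by linarith
  have hφw_sq' : ‖φ - w‖ ^ 2 ≤ (1 - ε ^ 2) * (ν₀ / (1 + ν₀)) := by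
    rw [← hSigle]
    linarith [hφw_sq]
  have hφw_norm : ‖φ - w‖ ≤ Real.sqrt (1 - ε ^ 2) := by
    have h1 : ‖φ - w‖ ≤ Real.sqrt ((1 - ε ^ 2) * (ν₀ / (1 + ν₀))) := by
      have h2 := Real.sqrt_le_sqrt hφw_sq'
      rwa [Real.sqrt_sq (norm_nonneg _)] at h2
    refine h1.trans ?_
    rw [Real.sqrt_mul h1me]
    exact mul_le_of_le_one_right (Real.sqrt_nonneg _) (Real.sqrt_le_one.mpr hκ_le)
  have hfinal : ‖ψ - w‖ ^ 2 ≤ ε ^ 2 + 2 * ε * Real.sqrt (1 - ε ^ 2)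
      + (1 - ε ^ 2) * (ν₀ / (1 + ν₀)) := by
    have h2 : ‖ψ - w‖ ^ 2 ≤ (ε + ‖φ - w‖) ^ 2 :=
      pow_le_pow_left₀ (norm_nonneg _) htri 2
    nlinarith [hφw_norm, hφw_sq', hε_nonneg, norm_nonneg (φ - w)]
  have halg : ε ^ 2 + (1 - ε ^ 2) * (ν₀ / (1 + ν₀))
      ≤ ν₀ / (1 + ν₀) + ε ^ 2 * (2 + ν₀) / (1 + ν₀) := by
    rw [← sub_nonneg]
    have hid : ν₀ / (1 + ν₀) + ε ^ 2 * (2 + ν₀) / (1 + ν₀)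
        - (ε ^ 2 + (1 - ε ^ 2) * (ν₀ / (1 + ν₀))) = ε ^ 2 := by
      field_simp
      ring
    rw [hid]
    positivity
  linarith [hPyth, hfinal, halg]
end
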